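/- arXiv:math/0307185 — 3 statements merged into one kernel-verified Lean document; each statement's English description precedes it below -/
import Mathlib

section
/- A functor M : A → Set from a category A with finite products preserves finite products if and only if the category of elements ∫_A M has finite products and the canonical projection functor P : ∫_A M → A preserves them. -/
open CategoryTheory CategoryTheory.Limits

section Aux

variable {A : Type} [SmallCategory A] [HasFiniteProducts A] (M : A ⥤ Type)

lemma aux_isIso_piComparison [HasFiniteProducts M.Elements]
    (J : Type) [Fintype J] (f : J → A) : IsIso (piComparison M f) := by
  rw [isIso_iff_bijective]
  constructor
  · -- injectivity
    intro m m' hmm'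
    have hj : ∀ j, M.map (Pi.π f j) m = M.map (Pi.π f j) m' := by
      intro j
      have h1 := ConcreteCategory.congr_hom (piComparison_comp_π M f j) m
      have h2 := ConcreteCategory.congr_hom (piComparison_comp_π M f j) m'
      simp only [types_comp_apply] at h1 h2
      rw [← h1, ← h2, hmm']
    set g : J → M.Elements := fun j => ⟨f j, M.map (Pi.π f j) m⟩ with hg
    let cm : Cone (Discrete.functor g) :=
      { pt := ⟨∏ᶜ f, m⟩
        π := Discrete.natTrans (fun j => ⟨Pi.π f j.as, rfl⟩) }
    let cm' : Cone (Discrete.functor g) :=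
      { pt := ⟨∏ᶜ f, m'⟩
        π := Discrete.natTrans (fun j => ⟨Pi.π f j.as, (hj j.as).symm⟩) }
    let u := limit.lift (Discrete.functor g) cm
    let u' := limit.lift (Discrete.functor g) cm'
    -- the retraction k : t ⟶ ∏ᶜ f
    let k : (limit (Discrete.functor g)).1 ⟶ ∏ᶜ f :=
      Pi.lift (fun j => (limit.π (Discrete.functor g) ⟨j⟩).val)
    have hki : u.val ≫ k = 𝟙 (∏ᶜ f) := by
      apply limit.hom_ext
      rintro ⟨j⟩
      have h1 : u.val ≫ (limit.π (Discrete.functor g) ⟨j⟩).val = Pi.π f j :=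
        congrArg Subtype.val (limit.lift_π cm ⟨j⟩)
      simp only [Category.assoc, Category.id_comp]
      rw [show (limit.π (Discrete.functor f) ⟨j⟩ : ∏ᶜ f ⟶ f j) = Pi.π f j from rfl]
      simp only [k, limit.lift_π, Fan.mk_π_app]
      exact h1.trans (Category.id_comp _).symm
    have hki' : u'.val ≫ k = 𝟙 (∏ᶜ f) := by
      apply limit.hom_ext
      rintro ⟨j⟩
      have h1 : u'.val ≫ (limit.π (Discrete.functor g) ⟨j⟩).val = Pi.π f j :=
        congrArg Subtype.val (limit.lift_π cm' ⟨j⟩)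
      simp only [Category.assoc, Category.id_comp]
      rw [show (limit.π (Discrete.functor f) ⟨j⟩ : ∏ᶜ f ⟶ f j) = Pi.π f j from rfl]
      simp only [k, limit.lift_π, Fan.mk_π_app]
      exact h1.trans (Category.id_comp _).symm
    have e1 : M.map u.val m = (limit (Discrete.functor g)).2 := u.2
    have e2 : M.map u'.val m' = (limit (Discrete.functor g)).2 := u'.2
    calc m = M.map (u.val ≫ k) m := by rw [hki, FunctorToTypes.map_id_apply]
      _ = M.map k (M.map u.val m) := by rw [FunctorToTypes.map_comp_apply]
      _ = M.map k (M.map u'.val m') := by rw [e1, e2]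
      _ = M.map (u'.val ≫ k) m' := by rw [FunctorToTypes.map_comp_apply]
      _ = m' := by rw [hki', FunctorToTypes.map_id_apply]
  · -- surjectivity
    intro y
    set g : J → M.Elements := fun j => ⟨f j, Pi.π (fun j => M.obj (f j)) j y⟩ with hg
    let k : (limit (Discrete.functor g)).1 ⟶ ∏ᶜ f :=
      Pi.lift (fun j => (limit.π (Discrete.functor g) ⟨j⟩).val)
    refine ⟨M.map k (limit (Discrete.functor g)).2, ?_⟩
    apply Types.limit_ext
    rintro ⟨j⟩
    have h1 := ConcreteCategory.congr_hom (piComparison_comp_π M f j) (M.map k (limit (Discrete.functor g)).2)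
    simp only [types_comp_apply] at h1
    have hk : k ≫ Pi.π f j = (limit.π (Discrete.functor g) ⟨j⟩).val := by simp [k]
    have h2 : M.map (Pi.π f j) (M.map k (limit (Discrete.functor g)).2)
        = Pi.π (fun j => M.obj (f j)) j y := by
      rw [← FunctorToTypes.map_comp_apply, hk, (limit.π (Discrete.functor g) ⟨j⟩).2]
      rfl
    exact h1.trans h2

lemma aux_preserves [HasFiniteProducts M.Elements] : PreservesFiniteProducts M := by
  refine ⟨fun n => ⟨fun {F} => ?_⟩⟩
  have : IsIso (piComparison M (fun j => F.obj ⟨j⟩)) :=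
    aux_isIso_piComparison M (Fin n) (fun j => F.obj ⟨j⟩)
  have := PreservesProduct.of_iso_comparison M (fun j => F.obj ⟨j⟩)
  exact preservesLimit_of_iso_diagram M
    ((Discrete.natIso (fun i => Iso.refl _)) :
      Discrete.functor (fun j => F.obj ⟨j⟩) ≅ F)

end Aux

/-- A functor `M : A ⥤ Type` from a category with finite products preserves finite
products if and only if the category of elements `∫_A M` has finite products and the
canonical projection `π : ∫_A M ⥤ A` preserves them. -/
theorem stmt2 {A : Type} [SmallCategory A] [HasFiniteProducts A] (M : A ⥤ Type) :
    Nonempty (PreservesFiniteProducts M) ↔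
      (HasFiniteProducts M.Elements ∧
        Nonempty (PreservesFiniteProducts (CategoryOfElements.π M))) := by
  constructor
  · rintro ⟨h⟩
    constructor
    · exact ⟨fun n => inferInstance⟩
    · exact ⟨⟨fun n => inferInstance⟩⟩
  · rintro ⟨h1, -⟩
    exact ⟨aux_preserves M⟩
end

section
/- Let 0 → D → E →^P A → 0 be a linear extension of a category A with finite products by a natural system D: P is full, identity on objects, and each fiber P⁻¹(f) carries a transitive effective D_f-action satisfying (a + f̃)(b + g̃) = f·b + a·g + f̃g̃. Then D is cartesian if and only if E has finite products and P preserves them. -/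
open CategoryTheory CategoryTheory.Limits

universe v u

/-- An object of the Baues–Wirsching category of factorizations of a category `C`. -/
structure FactObj (C : Type u) [Category.{v} C] : Type (max u v) where
  {src : C}
  {tgt : C}
  hom : src ⟶ tgt

instance FactObj.category (C : Type u) [Category.{v} C] : Category (FactObj C) where
  Hom f g := { p : (g.src ⟶ f.src) × (f.tgt ⟶ g.tgt) // g.hom = p.1 ≫ f.hom ≫ p.2 }
  id f := ⟨(𝟙 _, 𝟙 _), by simp⟩
  comp {f g h} p q := ⟨(q.1.1 ≫ p.1.1, p.1.2 ≫ q.1.2), by simp [q.2, p.2]⟩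
  id_comp p := by apply Subtype.ext; simp
  comp_id p := by apply Subtype.ext; simp
  assoc p q r := by apply Subtype.ext; simp

/-- A natural system of abelian groups on `C`. -/
abbrev NaturalSystem (C : Type u) [Category.{v} C] : Type _ :=
  FactObj C ⥤ AddCommGrpCat.{v}

variable {C : Type u} [catA : Category.{v} C]

/-- `f ⟶ f ≫ b` in the factorization category. -/
def natPost {X Y Z : C} (f : X ⟶ Y) (b : Y ⟶ Z) :
    (FactObj.mk f) ⟶ (FactObj.mk (f ≫ b)) :=
  ⟨(𝟙 X, b), by simp⟩

/-- `f ⟶ a ≫ f` in the factorization category. -/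
def natPre {X Y Z : C} (a : X ⟶ Y) (f : Y ⟶ Z) :
    (FactObj.mk f) ⟶ (FactObj.mk (a ≫ f)) :=
  ⟨(a, 𝟙 Z), by simp⟩

/-- Cartesianness of a natural system on a category with finite products. -/
def IsCartesianNS (D : NaturalSystem C) : Prop :=
  (∀ {X T : C} (_ : IsTerminal T) (f : X ⟶ T), Subsingleton (D.obj (FactObj.mk f))) ∧
  (∀ {X P X₁ X₂ : C} (p₁ : P ⟶ X₁) (p₂ : P ⟶ X₂)
      (_ : IsLimit (BinaryFan.mk p₁ p₂)) (f : X ⟶ P),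
    Function.Bijective (fun a : D.obj (FactObj.mk f) =>
      ((D.map (natPost f p₁) a, D.map (natPost f p₂) a) :
        D.obj (FactObj.mk (f ≫ p₁)) × D.obj (FactObj.mk (f ≫ p₂)))))

section LinearExtension

/-- A wrapper for a (second) category structure on the same type of objects. -/
structure CatOn (C : Type u) : Type (max u (v + 1)) where
  cat : Category.{v} C

/-- Morphisms of a second category structure `catE` on the same objects. -/
abbrev EHom (catE : CatOn.{v} C) (X Y : C) : Type v :=
  @Quiver.Hom C (@CategoryStruct.toQuiver C (@Category.toCategoryStruct C catE.cat)) X Y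

/-- Composition in the second category structure. -/
abbrev eComp (catE : CatOn.{v} C) {X Y Z : C}
    (f : EHom catE X Y) (g : EHom catE Y Z) : EHom catE X Z :=
  @CategoryStruct.comp C (@Category.toCategoryStruct C catE.cat) X Y Z f g

/-- The object part of a functor between two category structures on `C`. -/
abbrev eObj (catE : CatOn.{v} C) (P : @Functor C catE.cat C catA) (X : C) : C :=
  @Prefunctor.obj C (@CategoryStruct.toQuiver C (@Category.toCategoryStruct C catE.cat)) C (@CategoryStruct.toQuiver C (@Category.toCategoryStruct C catA))
    (@Functor.toPrefunctor C catE.cat C catA P) X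

/-- The morphism part of a functor between two category structures on `C`. -/
abbrev eMap (catE : CatOn.{v} C) (P : @Functor C catE.cat C catA) {X Y : C}
    (ft : EHom catE X Y) : eObj catE P X ⟶ eObj catE P Y :=
  @Prefunctor.map C (@CategoryStruct.toQuiver C (@Category.toCategoryStruct C catE.cat)) C (@CategoryStruct.toQuiver C (@Category.toCategoryStruct C catA))
    (@Functor.toPrefunctor C catE.cat C catA P) X Y ft

/-- Membership of an `E`-morphism in the fiber of `P` over `f : X ⟶ Y`. -/
def inFib (catE : CatOn.{v} C) (P : @Functor C catE.cat C catA)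
    (hobj : ∀ X : C, eObj catE P X = X) {X Y : C} (f : X ⟶ Y)
    (ft : EHom catE X Y) : Prop :=
  eMap catE P ft = eqToHom (hobj X) ≫ f ≫ eqToHom (hobj Y).symm

namespace BWAux

set_option linter.unusedSectionVars false

variable (catE : CatOn.{v} C) (P : @Functor C catE.cat C catA)
variable (hobj : ∀ X : C, eObj catE P X = X)

/-- The identity of the second category structure. -/
abbrev eId (X : C) : EHom catE X X :=
  @CategoryStruct.id C (@Category.toCategoryStruct C catE.cat) X

lemma e_id_comp {X Y : C} (f : EHom catE X Y) : eComp catE (eId catE X) f = f :=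
  @Category.id_comp C catE.cat X Y f

lemma e_comp_id {X Y : C} (f : EHom catE X Y) : eComp catE f (eId catE Y) = f :=
  @Category.comp_id C catE.cat X Y f

lemma e_assoc {W X Y Z : C} (f : EHom catE W X) (g : EHom catE X Y) (h : EHom catE Y Z) :
    eComp catE (eComp catE f g) h = eComp catE f (eComp catE g h) :=
  @Category.assoc C catE.cat W X Y Z f g h

lemma eMap_id (X : C) : eMap catE P (eId catE X) = 𝟙 (eObj catE P X) :=
  @CategoryTheory.Functor.map_id C catE.cat C catA P X

lemma eMap_comp {X Y Z : C} (f : EHom catE X Y) (g : EHom catE Y Z) :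
    eMap catE P (eComp catE f g) = eMap catE P f ≫ eMap catE P g :=
  @CategoryTheory.Functor.map_comp C catE.cat C catA P X Y Z f g

/-- The projection of an `E`-morphism to `A`. -/
def eproj {X Y : C} (ft : EHom catE X Y) : X ⟶ Y :=
  eqToHom (hobj X).symm ≫ eMap catE P ft ≫ eqToHom (hobj Y)

lemma inFib_eproj {X Y : C} (ft : EHom catE X Y) :
    inFib catE P hobj (eproj catE P hobj ft) ft := by
  rw [inFib, eproj]
  simp only [Category.assoc, eqToHom_trans, eqToHom_refl, Category.comp_id, eqToHom_trans_assoc, Category.id_comp]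

lemma inFib_base_eq {X Y : C} {f g : X ⟶ Y} {ft : EHom catE X Y}
    (hf : inFib catE P hobj f ft) (hg : inFib catE P hobj g ft) : f = g := by
  rw [inFib] at hf hg
  rw [hf] at hg
  simpa using congrArg (fun t => eqToHom (hobj X).symm ≫ t ≫ eqToHom (hobj Y)) hg

lemma inFib_id (X : C) : inFib catE P hobj (𝟙 X) (eId catE X) := by
  rw [inFib, eMap_id]
  simp

lemma inFib_comp {X Y Z : C} {f : X ⟶ Y} {g : Y ⟶ Z} {ft : EHom catE X Y}
    {gt : EHom catE Y Z} (hf : inFib catE P hobj f ft) (hg : inFib catE P hobj g gt) :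
    inFib catE P hobj (f ≫ g) (eComp catE ft gt) := by
  rw [inFib, eMap_comp, hf, hg]
  simp

variable (D : NaturalSystem C)

/-- Transport in the natural system along an equality of morphisms. -/
def castD {X Y : C} {f g : X ⟶ Y} (h : f = g) (a : D.obj (FactObj.mk f)) :
    D.obj (FactObj.mk g) :=
  h ▸ a

@[simp] lemma castD_rfl {X Y : C} {f : X ⟶ Y} (a : D.obj (FactObj.mk f)) :
    castD D rfl a = a := rfl

lemma castD_add {X Y : C} {f g : X ⟶ Y} (h h' : f = g) (a b : D.obj (FactObj.mk f)) :
    castD D h a + castD D h' b = castD D h (a + b) := by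
  subst h
  rfl

lemma castD_eq_map {X Y : C} {f g : X ⟶ Y} (h : f = g) (a : D.obj (FactObj.mk f)) :
    castD D h a = D.map (eqToHom (congrArg FactObj.mk h)) a := by
  subst h
  change a = D.map (eqToHom rfl) a
  rw [eqToHom_refl]
  simp

lemma eqToHomFact_val {F G : FactObj C} (h : F = G) :
    (eqToHom h).1 = (eqToHom (congrArg FactObj.src h).symm,
      eqToHom (congrArg FactObj.tgt h)) := by
  subst h
  rfl

lemma natPost_id_map {X Y : C} (f : X ⟶ Y) (a : D.obj (FactObj.mk f)) :
    D.map (natPost f (𝟙 Y)) a = castD D (Category.comp_id f).symm a := by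
  rw [castD_eq_map]
  have : natPost f (𝟙 Y) = eqToHom (congrArg FactObj.mk (Category.comp_id f).symm) :=
    Subtype.ext (by rw [eqToHomFact_val]; rfl)
  rw [this]

lemma natPre_id_map {X Y : C} (f : X ⟶ Y) (a : D.obj (FactObj.mk f)) :
    D.map (natPre (𝟙 X) f) a = castD D (Category.id_comp f).symm a := by
  rw [castD_eq_map]
  have : natPre (𝟙 X) f = eqToHom (congrArg FactObj.mk (Category.id_comp f).symm) :=
    Subtype.ext (by rw [eqToHomFact_val]; rfl)
  rw [this]

variable (act : ∀ {X Y : C} (f : X ⟶ Y),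
    D.obj (FactObj.mk f) → EHom catE X Y → EHom catE X Y)

lemma act_cast {X Y : C} {f g : X ⟶ Y} (h : f = g) (a : D.obj (FactObj.mk f))
    (ft : EHom catE X Y) : act g (castD D h a) ft = act f a ft := by
  subst h; rfl

lemma act_inj {X Y : C} {f : X ⟶ Y}
    (hact_zero : ∀ {X Y : C} (f : X ⟶ Y) (ft : EHom catE X Y), act f 0 ft = ft)
    (hact_add : ∀ {X Y : C} (f : X ⟶ Y) (a b : D.obj (FactObj.mk f))
      (ft : EHom catE X Y), act f (a + b) ft = act f a (act f b ft))
    (hfree : ∀ {X Y : C} (f : X ⟶ Y) (a : D.obj (FactObj.mk f)) (ft : EHom catE X Y),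
      inFib catE P hobj f ft → act f a ft = ft → a = 0)
    (a b : D.obj (FactObj.mk f)) (ft : EHom catE X Y)
    (hmem : inFib catE P hobj f ft) (h : act f a ft = act f b ft) : a = b := by
  have h2 : act f (-b + a) ft = ft := by
    rw [hact_add, h, ← hact_add, neg_add_cancel, hact_zero]
  have h3 := hfree f _ ft hmem h2
  exact (neg_add_eq_zero.mp h3).symm

lemma comp_act_id {X : C}
    (hcompat : ∀ {X Y Z : C} (f : X ⟶ Y) (g : Y ⟶ Z)
      (a : D.obj (FactObj.mk f)) (b : D.obj (FactObj.mk g))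
      (ft : EHom catE X Y) (gt : EHom catE Y Z),
      eComp catE (act f a ft) (act g b gt) =
        act (f ≫ g) (D.map (natPost f g) a + D.map (natPre f g) b) (eComp catE ft gt))
    (c d : D.obj (FactObj.mk (𝟙 X))) :
    eComp catE (act (𝟙 X) c (eId catE X)) (act (𝟙 X) d (eId catE X)) =
      act (𝟙 X) (c + d) (eId catE X) := by
  rw [hcompat, natPost_id_map, natPre_id_map, castD_add, e_id_comp]
  exact act_cast catE D act _ _ _

lemma fib_id_inv {X : C}
    (hact_zero : ∀ {X Y : C} (f : X ⟶ Y) (ft : EHom catE X Y), act f 0 ft = ft)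
    (htrans : ∀ {X Y : C} (f : X ⟶ Y) (ft ft' : EHom catE X Y),
      inFib catE P hobj f ft → inFib catE P hobj f ft' → ∃ a, act f a ft = ft')
    (hcompat : ∀ {X Y Z : C} (f : X ⟶ Y) (g : Y ⟶ Z)
      (a : D.obj (FactObj.mk f)) (b : D.obj (FactObj.mk g))
      (ft : EHom catE X Y) (gt : EHom catE Y Z),
      eComp catE (act f a ft) (act g b gt) =
        act (f ≫ g) (D.map (natPost f g) a + D.map (natPre f g) b) (eComp catE ft gt))
    (e1 : EHom catE X X) (hmem : inFib catE P hobj (𝟙 X) e1) :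
    ∃ e2, eComp catE e1 e2 = eId catE X ∧ eComp catE e2 e1 = eId catE X := by
  obtain ⟨c, hc⟩ := htrans (𝟙 X) (eId catE X) e1 (inFib_id catE P hobj X) hmem
  refine ⟨act (𝟙 X) (-c) (eId catE X), ?_, ?_⟩
  · rw [← hc, comp_act_id catE D act hcompat, add_neg_cancel, hact_zero]
  · rw [← hc, comp_act_id catE D act hcompat, neg_add_cancel, hact_zero]

lemma iso_lift {X Y : C} (h : X ⟶ Y) [IsIso h] (hh : EHom catE X Y)
    (hmem : inFib catE P hobj h hh)
    (hfull : ∀ {X Y : C} (f : X ⟶ Y), ∃ ft, inFib catE P hobj f ft)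
    (hact_mem : ∀ {X Y : C} (f : X ⟶ Y) (a : D.obj (FactObj.mk f)) (ft : EHom catE X Y),
      inFib catE P hobj f ft → inFib catE P hobj f (act f a ft))
    (hact_zero : ∀ {X Y : C} (f : X ⟶ Y) (ft : EHom catE X Y), act f 0 ft = ft)
    (htrans : ∀ {X Y : C} (f : X ⟶ Y) (ft ft' : EHom catE X Y),
      inFib catE P hobj f ft → inFib catE P hobj f ft' → ∃ a, act f a ft = ft')
    (hcompat : ∀ {X Y Z : C} (f : X ⟶ Y) (g : Y ⟶ Z)
      (a : D.obj (FactObj.mk f)) (b : D.obj (FactObj.mk g))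
      (ft : EHom catE X Y) (gt : EHom catE Y Z),
      eComp catE (act f a ft) (act g b gt) =
        act (f ≫ g) (D.map (natPost f g) a + D.map (natPre f g) b) (eComp catE ft gt)) :
    ∃ k : EHom catE Y X, inFib catE P hobj (inv h) k ∧
      eComp catE hh k = eId catE X ∧ eComp catE k hh = eId catE Y := by
  obtain ⟨k₀, hk₀⟩ := hfull (inv h)
  have hck : inFib catE P hobj (𝟙 X) (eComp catE hh k₀) := by
    have := inFib_comp catE P hobj hmem hk₀
    rwa [IsIso.hom_inv_id] at this
  obtain ⟨c, hc⟩ := htrans (𝟙 X) (eComp catE hh k₀) (eId catE X) hck (inFib_id catE P hobj X)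
  have hψwf : (inv h : Y ⟶ X) = inv h ≫ (h ≫ inv h) ≫ 𝟙 X := by simp
  set ψ : (FactObj.mk (h ≫ inv h)) ⟶ (FactObj.mk (inv h)) := ⟨(inv h, 𝟙 X), hψwf⟩ with hψ
  set c' : D.obj (FactObj.mk (inv h)) :=
    D.map ψ (castD D (IsIso.hom_inv_id h).symm c) with hc'
  have hψcomp : ψ ≫ natPre h (inv h) = 𝟙 (FactObj.mk (h ≫ inv h)) := by
    apply Subtype.ext
    show (h ≫ inv h, 𝟙 X ≫ 𝟙 X) = (𝟙 X, 𝟙 X)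
    simp
  have hmap : D.map (natPre h (inv h)) c' = castD D (IsIso.hom_inv_id h).symm c := by
    rw [hc']
    have : D.map (natPre h (inv h)) (D.map ψ (castD D (IsIso.hom_inv_id h).symm c)) =
        D.map (ψ ≫ natPre h (inv h)) (castD D (IsIso.hom_inv_id h).symm c) := by
      rw [D.map_comp]; rfl
    rw [this, hψcomp]
    simp
  refine ⟨act (inv h) c' k₀, hact_mem _ _ _ hk₀, ?_, ?_⟩
  · conv_lhs => rw [← hact_zero h hh]
    rw [hcompat, map_zero, zero_add, hmap, act_cast catE D act, hc]
  · set k := act (inv h) c' k₀ with hk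
    have hkmem : inFib catE P hobj (inv h) k := hact_mem _ _ _ hk₀
    have h1 : eComp catE hh k = eId catE X := by
      rw [hk]
      conv_lhs => rw [← hact_zero h hh]
      rw [hcompat, map_zero, zero_add, hmap, act_cast catE D act, hc]
    have hkh : inFib catE P hobj (𝟙 Y) (eComp catE k hh) := by
      have := inFib_comp catE P hobj hkmem hmem
      rwa [IsIso.inv_hom_id] at this
    obtain ⟨w, hw1, _⟩ := fib_id_inv catE P hobj D act hact_zero htrans hcompat
      (eComp catE k hh) hkh
    have hzz : eComp catE (eComp catE k hh) (eComp catE k hh) = eComp catE k hh := by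
      rw [e_assoc, ← e_assoc catE hh k hh, h1, e_id_comp]
    calc eComp catE k hh
        = eComp catE (eComp catE k hh) (eId catE Y) := (e_comp_id catE _).symm
      _ = eComp catE (eComp catE k hh) (eComp catE (eComp catE k hh) w) := by rw [hw1]
      _ = eComp catE (eComp catE (eComp catE k hh) (eComp catE k hh)) w :=
          (e_assoc catE _ _ _).symm
      _ = eComp catE (eComp catE k hh) w := by rw [hzz]
      _ = eId catE Y := hw1

lemma ehom_term_sub {X T : C} (hT : IsTerminal T)
    (hD1 : ∀ {X T : C} (_ : IsTerminal T) (f : X ⟶ T), Subsingleton (D.obj (FactObj.mk f)))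
    (hact_zero : ∀ {X Y : C} (f : X ⟶ Y) (ft : EHom catE X Y), act f 0 ft = ft)
    (htrans : ∀ {X Y : C} (f : X ⟶ Y) (ft ft' : EHom catE X Y),
      inFib catE P hobj f ft → inFib catE P hobj f ft' → ∃ a, act f a ft = ft')
    (g1 g2 : EHom catE X T) : g1 = g2 := by
  have h1 := inFib_eproj catE P hobj g1
  have h2 := inFib_eproj catE P hobj g2
  have he : eproj catE P hobj g1 = eproj catE P hobj g2 := hT.hom_ext _ _
  rw [he] at h1
  obtain ⟨a, ha⟩ := htrans _ g1 g2 h1 h2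
  haveI := hD1 hT (eproj catE P hobj g2)
  rw [Subsingleton.elim a 0, hact_zero] at ha
  exact ha

lemma elim_fan
    (hD2 : ∀ {X P' X₁ X₂ : C} (p₁ : P' ⟶ X₁) (p₂ : P' ⟶ X₂)
      (_ : IsLimit (BinaryFan.mk p₁ p₂)) (f : X ⟶ P'),
      Function.Bijective (fun a : D.obj (FactObj.mk f) =>
        ((D.map (natPost f p₁) a, D.map (natPost f p₂) a) :
          D.obj (FactObj.mk (f ≫ p₁)) × D.obj (FactObj.mk (f ≫ p₂)))))
    {Pr X₁ X₂ : C} {p₁ : Pr ⟶ X₁} {p₂ : Pr ⟶ X₂} (hl : IsLimit (BinaryFan.mk p₁ p₂))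
    {pt₁ : EHom catE Pr X₁} {pt₂ : EHom catE Pr X₂}
    (hp₁ : inFib catE P hobj p₁ pt₁) (hp₂ : inFib catE P hobj p₂ pt₂)
    (hfull : ∀ {X Y : C} (f : X ⟶ Y), ∃ ft, inFib catE P hobj f ft)
    (hact_mem : ∀ {X Y : C} (f : X ⟶ Y) (a : D.obj (FactObj.mk f)) (ft : EHom catE X Y),
      inFib catE P hobj f ft → inFib catE P hobj f (act f a ft))
    (hact_zero : ∀ {X Y : C} (f : X ⟶ Y) (ft : EHom catE X Y), act f 0 ft = ft)
    (htrans : ∀ {X Y : C} (f : X ⟶ Y) (ft ft' : EHom catE X Y),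
      inFib catE P hobj f ft → inFib catE P hobj f ft' → ∃ a, act f a ft = ft')
    (hfree : ∀ {X Y : C} (f : X ⟶ Y) (a : D.obj (FactObj.mk f)) (ft : EHom catE X Y),
      inFib catE P hobj f ft → act f a ft = ft → a = 0)
    (hcompat : ∀ {X Y Z : C} (f : X ⟶ Y) (g : Y ⟶ Z)
      (a : D.obj (FactObj.mk f)) (b : D.obj (FactObj.mk g))
      (ft : EHom catE X Y) (gt : EHom catE Y Z),
      eComp catE (act f a ft) (act g b gt) =
        act (f ≫ g) (D.map (natPost f g) a + D.map (natPre f g) b) (eComp catE ft gt))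
    {X : C} (x₁ : EHom catE X X₁) (x₂ : EHom catE X X₂) :
    ∃! ft : EHom catE X Pr, eComp catE ft pt₁ = x₁ ∧ eComp catE ft pt₂ = x₂ := by
  set f : X ⟶ Pr := hl.lift (BinaryFan.mk (eproj catE P hobj x₁) (eproj catE P hobj x₂))
    with hfdef
  have hf₁ : f ≫ p₁ = eproj catE P hobj x₁ := by
    simpa using hl.fac (BinaryFan.mk (eproj catE P hobj x₁) (eproj catE P hobj x₂))
      ⟨WalkingPair.left⟩
  have hf₂ : f ≫ p₂ = eproj catE P hobj x₂ := by
    simpa using hl.fac (BinaryFan.mk (eproj catE P hobj x₁) (eproj catE P hobj x₂))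
      ⟨WalkingPair.right⟩
  obtain ⟨ft₀, hft₀⟩ := hfull f
  have m₁ : inFib catE P hobj (eproj catE P hobj x₁) (eComp catE ft₀ pt₁) := by
    have := inFib_comp catE P hobj hft₀ hp₁; rwa [hf₁] at this
  have m₂ : inFib catE P hobj (eproj catE P hobj x₂) (eComp catE ft₀ pt₂) := by
    have := inFib_comp catE P hobj hft₀ hp₂; rwa [hf₂] at this
  obtain ⟨a₁, ha₁⟩ := htrans _ (eComp catE ft₀ pt₁) x₁ m₁ (inFib_eproj catE P hobj x₁)
  obtain ⟨a₂, ha₂⟩ := htrans _ (eComp catE ft₀ pt₂) x₂ m₂ (inFib_eproj catE P hobj x₂)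
  obtain ⟨a, ha⟩ := (hD2 p₁ p₂ hl f).2 (castD D hf₁.symm a₁, castD D hf₂.symm a₂)
  have ha1 : D.map (natPost f p₁) a = castD D hf₁.symm a₁ := congrArg Prod.fst ha
  have ha2 : D.map (natPost f p₂) a = castD D hf₂.symm a₂ := congrArg Prod.snd ha
  refine ⟨act f a ft₀, ⟨?_, ?_⟩, ?_⟩
  · conv_lhs => rw [← hact_zero p₁ pt₁]
    rw [hcompat, map_zero, add_zero, ha1, act_cast catE D act, ha₁]
  · conv_lhs => rw [← hact_zero p₂ pt₂]
    rw [hcompat, map_zero, add_zero, ha2, act_cast catE D act, ha₂]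
  · rintro g ⟨hg₁, hg₂⟩
    have eq₁ : eComp catE (act f a ft₀) pt₁ = x₁ := by
      conv_lhs => rw [← hact_zero p₁ pt₁]
      rw [hcompat, map_zero, add_zero, ha1, act_cast catE D act, ha₁]
    have eq₂ : eComp catE (act f a ft₀) pt₂ = x₂ := by
      conv_lhs => rw [← hact_zero p₂ pt₂]
      rw [hcompat, map_zero, add_zero, ha2, act_cast catE D act, ha₂]
    have hgb₁ : eproj catE P hobj g ≫ p₁ = eproj catE P hobj x₁ := by
      have h' := inFib_comp catE P hobj (inFib_eproj catE P hobj g) hp₁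
      rw [hg₁] at h'
      exact inFib_base_eq catE P hobj h' (inFib_eproj catE P hobj x₁)
    have hgb₂ : eproj catE P hobj g ≫ p₂ = eproj catE P hobj x₂ := by
      have h' := inFib_comp catE P hobj (inFib_eproj catE P hobj g) hp₂
      rw [hg₂] at h'
      exact inFib_base_eq catE P hobj h' (inFib_eproj catE P hobj x₂)
    have hgf : eproj catE P hobj g = f :=
      BinaryFan.IsLimit.hom_ext hl
        (by simpa using hgb₁.trans hf₁.symm) (by simpa using hgb₂.trans hf₂.symm)
    have gmem : inFib catE P hobj f g := by
      have := inFib_eproj catE P hobj g; rwa [hgf] at this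
    obtain ⟨b, hb⟩ := htrans f (act f a ft₀) g (hact_mem _ _ _ hft₀) gmem
    have hx₁mem : inFib catE P hobj (f ≫ p₁) x₁ := by
      rw [hf₁]; exact inFib_eproj catE P hobj x₁
    have hx₂mem : inFib catE P hobj (f ≫ p₂) x₂ := by
      rw [hf₂]; exact inFib_eproj catE P hobj x₂
    have key₁ : eComp catE g pt₁ =
        act (f ≫ p₁) (D.map (natPost f p₁) b) (eComp catE (act f a ft₀) pt₁) := by
      rw [← hb]
      conv_lhs => rw [← hact_zero p₁ pt₁]
      rw [hcompat, map_zero, add_zero]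
    have key₂ : eComp catE g pt₂ =
        act (f ≫ p₂) (D.map (natPost f p₂) b) (eComp catE (act f a ft₀) pt₂) := by
      rw [← hb]
      conv_lhs => rw [← hact_zero p₂ pt₂]
      rw [hcompat, map_zero, add_zero]
    rw [eq₁] at key₁
    rw [eq₂] at key₂
    have hb₁ : D.map (natPost f p₁) b = 0 :=
      hfree _ _ _ hx₁mem (key₁.symm.trans hg₁)
    have hb₂ : D.map (natPost f p₂) b = 0 :=
      hfree _ _ _ hx₂mem (key₂.symm.trans hg₂)
    have hb0 : b = 0 := by
      apply (hD2 p₁ p₂ hl f).1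
      show (_, _) = (_, _)
      rw [hb₁, hb₂, map_zero, map_zero]
    rw [← hb, hb0, hact_zero]

lemma eqToHom_sandwich {a b c d : C} (h1 h4 : a = b) (g : b ⟶ c) (h2 : c = d) (h3 : d = c) :
    (eqToHom h1 ≫ g ≫ eqToHom h2) ≫ eqToHom h3 = eqToHom h4 ≫ g := by
  subst h2; simp

lemma dir1 [HasFiniteProducts C]
    (hfull : ∀ {X Y : C} (f : X ⟶ Y), ∃ ft, inFib catE P hobj f ft)
    (hact_mem : ∀ {X Y : C} (f : X ⟶ Y) (a : D.obj (FactObj.mk f)) (ft : EHom catE X Y),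
      inFib catE P hobj f ft → inFib catE P hobj f (act f a ft))
    (hact_zero : ∀ {X Y : C} (f : X ⟶ Y) (ft : EHom catE X Y), act f 0 ft = ft)
    (htrans : ∀ {X Y : C} (f : X ⟶ Y) (ft ft' : EHom catE X Y),
      inFib catE P hobj f ft → inFib catE P hobj f ft' → ∃ a, act f a ft = ft')
    (hfree : ∀ {X Y : C} (f : X ⟶ Y) (a : D.obj (FactObj.mk f)) (ft : EHom catE X Y),
      inFib catE P hobj f ft → act f a ft = ft → a = 0)
    (hcompat : ∀ {X Y Z : C} (f : X ⟶ Y) (g : Y ⟶ Z)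
      (a : D.obj (FactObj.mk f)) (b : D.obj (FactObj.mk g))
      (ft : EHom catE X Y) (gt : EHom catE Y Z),
      eComp catE (act f a ft) (act g b gt) =
        act (f ≫ g) (D.map (natPost f g) a + D.map (natPre f g) b) (eComp catE ft gt))
    (hD : IsCartesianNS D) :
    @HasFiniteProducts C catE.cat ∧
      Nonempty (@PreservesFiniteProducts C catE.cat C catA P) := by
  obtain ⟨hD1, hD2⟩ := hD
  -- the terminal object of `A` is terminal in `E`
  haveI hsub : ∀ Y : C, Subsingleton (EHom catE Y (⊤_ C)) := fun Y =>
    ⟨fun g1 g2 => ehom_term_sub catE P hobj D act terminalIsTerminal hD1 hact_zero htrans g1 g2⟩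
  haveI hne : ∀ Y : C, Nonempty (EHom catE Y (⊤_ C)) := fun Y =>
    ⟨(hfull (terminal.from Y)).choose⟩
  have hterm : @HasTerminal C catE.cat :=
    @hasTerminal_of_unique C catE.cat (⊤_ C) hne hsub
  have etermIsTerm : @IsTerminal C catE.cat (⊤_ C) :=
    @IsTerminal.ofUniqueHom C catE.cat (⊤_ C)
      (fun Y => Classical.choice (hne Y)) (fun Y m => Subsingleton.elim _ _)
  -- binary products in `E`
  have binData : ∀ X₁ X₂ : C, Σ' (pt₁ : EHom catE (X₁ ⨯ X₂) X₁)
      (pt₂ : EHom catE (X₁ ⨯ X₂) X₂)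
      (_ : @IsLimit _ _ C catE.cat (@pair C catE.cat X₁ X₂)
        (@BinaryFan.mk C catE.cat X₁ X₂ _ pt₁ pt₂)),
      inFib catE P hobj prod.fst pt₁ ∧ inFib catE P hobj prod.snd pt₂ := by
    intro X₁ X₂
    have hex₁ := hfull (prod.fst : X₁ ⨯ X₂ ⟶ X₁)
    have hex₂ := hfull (prod.snd : X₁ ⨯ X₂ ⟶ X₂)
    set pt₁ := hex₁.choose with hpt₁
    set pt₂ := hex₂.choose with hpt₂
    have h1 := hex₁.choose_spec
    have h2 := hex₂.choose_spec
    have elim := fun {X : C} (x₁ : EHom catE X X₁) (x₂ : EHom catE X X₂) =>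
      elim_fan catE P hobj D act hD2 (prodIsProd X₁ X₂) h1 h2 hfull hact_mem hact_zero
        htrans hfree hcompat x₁ x₂
    refine ⟨pt₁, pt₂, ?_, h1, h2⟩
    exact @BinaryFan.IsLimit.mk C catE.cat X₁ X₂
      (@BinaryFan.mk C catE.cat X₁ X₂ _ pt₁ pt₂)
      (fun {T} x₁ x₂ => (elim x₁ x₂).choose)
      (fun {T} x₁ x₂ => (elim x₁ x₂).choose_spec.1.1)
      (fun {T} x₁ x₂ => (elim x₁ x₂).choose_spec.1.2)
      (fun {T} x₁ x₂ m hm₁ hm₂ => (elim x₁ x₂).choose_spec.2 m ⟨hm₁, hm₂⟩)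
  haveI hbp : ∀ X₁ X₂ : C, @HasLimit _ _ C catE.cat (@pair C catE.cat X₁ X₂) := by
    letI := catE.cat
    exact fun X₁ X₂ => HasLimit.mk ⟨_, (binData X₁ X₂).2.2.1⟩
  have hbin : @HasBinaryProducts C catE.cat := by
    letI := catE.cat
    haveI : ∀ X₁ X₂ : C, HasLimit (pair X₁ X₂) := hbp
    exact ⟨fun F => hasLimit_of_iso (diagramIsoPair F).symm⟩
  have hfp : @HasFiniteProducts C catE.cat :=
    @hasFiniteProducts_of_has_binary_and_terminal C catE.cat hbin hterm
  refine ⟨hfp, ?_⟩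
  -- preservation of the empty product
  have p_empty : @PreservesLimit C catE.cat C catA _ _
      (@Functor.empty.{0} C catE.cat) P :=
    @preservesLimit_of_preserves_limit_cone C catE.cat C catA _ _
      (@Functor.empty.{0} C catE.cat) P
      (@asEmptyCone C catE.cat (⊤_ C)) etermIsTerm
      (isLimitChangeEmptyCone C terminalIsTerminal _ (eqToIso (hobj (⊤_ C))).symm)
  have p_shape_empty : @PreservesLimitsOfShape C catE.cat C catA (Discrete PEmpty) _ P :=
    @preservesLimitsOfShape_pempty_of_preservesTerminal C catE.cat C catA P p_empty
  -- preservation of binary products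
  have p_pair : ∀ X₁ X₂ : C, @PreservesLimit C catE.cat C catA _ _
      (@pair C catE.cat X₁ X₂) P := by
    intro X₁ X₂
    obtain ⟨pt₁, pt₂, fanIsLim, h1, h2⟩ := binData X₁ X₂
    let α : (@Functor.comp _ _ C catE.cat C catA (@pair C catE.cat X₁ X₂) P) ≅
        pair X₁ X₂ :=
      Discrete.natIso (fun j => match j with
        | ⟨WalkingPair.left⟩ => eqToIso (hobj X₁)
        | ⟨WalkingPair.right⟩ => eqToIso (hobj X₂))
    have w : (Cones.postcompose α.hom).obj
        (@Functor.mapCone (Discrete WalkingPair) _ C catE.cat C catA P _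
          (@BinaryFan.mk C catE.cat X₁ X₂ _ pt₁ pt₂)) ≅
        BinaryFan.mk (prod.fst : X₁ ⨯ X₂ ⟶ X₁) prod.snd := by
      refine Cones.ext (eqToIso (hobj (X₁ ⨯ X₂))) ?_
      rintro ⟨⟨⟩⟩
      · show eMap catE P pt₁ ≫ _ = _
        rw [h1]; simp [α]
        exact eqToHom_sandwich (hobj _) (hobj _) _ (hobj _).symm (hobj _)
      · show eMap catE P pt₂ ≫ _ = _
        rw [h2]; simp [α]
        exact eqToHom_sandwich (hobj _) (hobj _) _ (hobj _).symm (hobj _)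
    exact @preservesLimit_of_preserves_limit_cone C catE.cat C catA _ _
      (@pair C catE.cat X₁ X₂) P
      (@BinaryFan.mk C catE.cat X₁ X₂ _ pt₁ pt₂)
      fanIsLim ((IsLimit.equivOfNatIsoOfIso α _ _ w).symm (prodIsProd X₁ X₂))
  have p_shape_pair : @PreservesLimitsOfShape C catE.cat C catA (Discrete WalkingPair) _ P := by
    refine @PreservesLimitsOfShape.mk C catE.cat C catA (Discrete WalkingPair) _ P
      (fun {K} => ?_)
    letI := catE.cat
    haveI := p_pair (K.obj ⟨WalkingPair.left⟩) (K.obj ⟨WalkingPair.right⟩)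
    exact @preservesLimit_of_iso_diagram C catE.cat C catA _ _ _ K P
      (diagramIsoPair K).symm this
  exact ⟨@PreservesFiniteProducts.of_preserves_binary_and_terminal C catE.cat C catA P
      p_shape_pair p_shape_empty hfp⟩

lemma dir2 [HasFiniteProducts C]
    (hfull : ∀ {X Y : C} (f : X ⟶ Y), ∃ ft, inFib catE P hobj f ft)
    (hact_mem : ∀ {X Y : C} (f : X ⟶ Y) (a : D.obj (FactObj.mk f)) (ft : EHom catE X Y),
      inFib catE P hobj f ft → inFib catE P hobj f (act f a ft))
    (hact_zero : ∀ {X Y : C} (f : X ⟶ Y) (ft : EHom catE X Y), act f 0 ft = ft)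
    (hact_add : ∀ {X Y : C} (f : X ⟶ Y) (a b : D.obj (FactObj.mk f))
      (ft : EHom catE X Y), act f (a + b) ft = act f a (act f b ft))
    (htrans : ∀ {X Y : C} (f : X ⟶ Y) (ft ft' : EHom catE X Y),
      inFib catE P hobj f ft → inFib catE P hobj f ft' → ∃ a, act f a ft = ft')
    (hfree : ∀ {X Y : C} (f : X ⟶ Y) (a : D.obj (FactObj.mk f)) (ft : EHom catE X Y),
      inFib catE P hobj f ft → act f a ft = ft → a = 0)
    (hcompat : ∀ {X Y Z : C} (f : X ⟶ Y) (g : Y ⟶ Z)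
      (a : D.obj (FactObj.mk f)) (b : D.obj (FactObj.mk g))
      (ft : EHom catE X Y) (gt : EHom catE Y Z),
      eComp catE (act f a ft) (act g b gt) =
        act (f ≫ g) (D.map (natPost f g) a + D.map (natPre f g) b) (eComp catE ft gt))
    (hE : @HasFiniteProducts C catE.cat)
    (hP : @PreservesFiniteProducts C catE.cat C catA P) :
    IsCartesianNS D := by
  -- a terminal object of `E`
  have EtermData : Σ' T' : C, @IsTerminal C catE.cat T' := by
    letI := catE.cat
    exact ⟨⊤_ C, terminalIsTerminal⟩
  obtain ⟨T', hT'E⟩ := EtermData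
  have presEmpty : @PreservesLimitsOfShape C catE.cat C catA (Discrete PEmpty.{1}) _ P := by
    letI := catE.cat; exact inferInstance
  have presPair : @PreservesLimitsOfShape C catE.cat C catA (Discrete WalkingPair) _ P := by
    letI := catE.cat; exact inferInstance
  have hT'A : IsTerminal T' :=
    isLimitChangeEmptyCone C
      (@isLimitOfPreserves C catE.cat C catA _ _ (@Functor.empty.{0} C catE.cat) P _
        hT'E presEmpty.preservesLimit)
      (asEmptyCone T') (eqToIso (hobj T'))
  constructor
  · -- terminal part
    intro X T hT f
    have iso : T ≅ T' := hT.uniqueUpToIso hT'A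
    obtain ⟨hhat, hmemh⟩ := hfull iso.hom
    obtain ⟨k, hkmem, hk1, hk2⟩ := iso_lift catE P hobj D act iso.hom hhat hmemh hfull
      hact_mem hact_zero htrans hcompat
    have ehom_sub : ∀ g1 g2 : EHom catE X T, g1 = g2 := by
      intro g1 g2
      have hcmp : eComp catE g1 hhat = eComp catE g2 hhat :=
        @IsTerminal.hom_ext C catE.cat T' X hT'E _ _
      calc g1 = eComp catE g1 (eId catE T) := (e_comp_id catE g1).symm
        _ = eComp catE g1 (eComp catE hhat k) := by rw [hk1]
        _ = eComp catE (eComp catE g1 hhat) k := (e_assoc catE _ _ _).symm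
        _ = eComp catE (eComp catE g2 hhat) k := by rw [hcmp]
        _ = eComp catE g2 (eComp catE hhat k) := e_assoc catE _ _ _
        _ = eComp catE g2 (eId catE T) := by rw [hk1]
        _ = g2 := e_comp_id catE g2
    refine ⟨fun a b => ?_⟩
    obtain ⟨ftil, hmemf⟩ := hfull f
    exact act_inj catE P hobj D act hact_zero hact_add hfree a b ftil hmemf
      (ehom_sub _ _)
  · -- binary product part
    intro X Pr X₁ X₂ p₁ p₂ hl f
    have Edata : Σ' (Q : C) (qt₁ : EHom catE Q X₁) (qt₂ : EHom catE Q X₂),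
        @IsLimit _ _ C catE.cat (@pair C catE.cat X₁ X₂)
          (@BinaryFan.mk C catE.cat X₁ X₂ Q qt₁ qt₂) := by
      letI := catE.cat
      haveI := hE
      exact ⟨X₁ ⨯ X₂, prod.fst, prod.snd, prodIsProd X₁ X₂⟩
    obtain ⟨Q, qt₁, qt₂, lq⟩ := Edata
    have Elift : ∀ (Z : C) (x₁ : EHom catE Z X₁) (x₂ : EHom catE Z X₂),
        ∃ u : EHom catE Z Q, eComp catE u qt₁ = x₁ ∧ eComp catE u qt₂ = x₂ := by
      letI := catE.cat
      intro Z x₁ x₂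
      obtain ⟨u, hu1, hu2⟩ := BinaryFan.IsLimit.lift' lq x₁ x₂
      exact ⟨u, hu1, hu2⟩
    have Eext : ∀ (Z : C) (u v : EHom catE Z Q),
        eComp catE u qt₁ = eComp catE v qt₁ → eComp catE u qt₂ = eComp catE v qt₂ →
          u = v := by
      letI := catE.cat
      intro Z u v h1 h2
      exact BinaryFan.IsLimit.hom_ext lq h1 h2
    set q₁ := eproj catE P hobj qt₁ with hq₁
    set q₂ := eproj catE P hobj qt₂ with hq₂
    -- the projected fan is a limit fan in `A`
    let α : (@Functor.comp _ _ C catE.cat C catA (@pair C catE.cat X₁ X₂) P) ≅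
        pair X₁ X₂ :=
      Discrete.natIso (fun j => match j with
        | ⟨WalkingPair.left⟩ => eqToIso (hobj X₁)
        | ⟨WalkingPair.right⟩ => eqToIso (hobj X₂))
    have w : (Cones.postcompose α.hom).obj
        (@Functor.mapCone (Discrete WalkingPair) _ C catE.cat C catA P _
          (@BinaryFan.mk C catE.cat X₁ X₂ Q qt₁ qt₂)) ≅
        BinaryFan.mk q₁ q₂ := by
      refine Cones.ext (eqToIso (hobj Q)) ?_
      rintro ⟨⟨⟩⟩
      · show eMap catE P qt₁ ≫ _ = _
        rw [inFib_eproj catE P hobj qt₁]; simp [α, hq₁]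
        exact eqToHom_sandwich (hobj _) (hobj _) _ (hobj _).symm (hobj _)
      · show eMap catE P qt₂ ≫ _ = _
        rw [inFib_eproj catE P hobj qt₂]; simp [α, hq₂]
        exact eqToHom_sandwich (hobj _) (hobj _) _ (hobj _).symm (hobj _)
    have hlQ : IsLimit (BinaryFan.mk q₁ q₂) :=
      (IsLimit.equivOfNatIsoOfIso α _ _ w)
        (@isLimitOfPreserves C catE.cat C catA _ _ (@pair C catE.cat X₁ X₂) P _
          lq presPair.preservesLimit)
    -- comparison isomorphism between the two products in `A`
    let ciso : Pr ≅ Q := IsLimit.conePointUniqueUpToIso hl hlQ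
    have hc₁ : ciso.hom ≫ q₁ = p₁ := by
      simpa using IsLimit.conePointUniqueUpToIso_hom_comp hl hlQ ⟨WalkingPair.left⟩
    have hc₂ : ciso.hom ≫ q₂ = p₂ := by
      simpa using IsLimit.conePointUniqueUpToIso_hom_comp hl hlQ ⟨WalkingPair.right⟩
    obtain ⟨hhat, hmemh⟩ := hfull ciso.hom
    obtain ⟨k, hkmem, hk1, hk2⟩ := iso_lift catE P hobj D act ciso.hom hhat hmemh hfull
      hact_mem hact_zero htrans hcompat
    set rt₁ := eComp catE hhat qt₁ with hrt₁
    set rt₂ := eComp catE hhat qt₂ with hrt₂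
    have hr₁ : inFib catE P hobj p₁ rt₁ := by
      have := inFib_comp catE P hobj hmemh (inFib_eproj catE P hobj qt₁)
      rwa [hc₁] at this
    have hr₂ : inFib catE P hobj p₂ rt₂ := by
      have := inFib_comp catE P hobj hmemh (inFib_eproj catE P hobj qt₂)
      rwa [hc₂] at this
    -- existence and uniqueness of factorizations through the lifted fan
    have Ex : ∀ (x₁ : EHom catE X X₁) (x₂ : EHom catE X X₂),
        ∃ u : EHom catE X Pr, eComp catE u rt₁ = x₁ ∧ eComp catE u rt₂ = x₂ := by
      intro x₁ x₂
      obtain ⟨u', hu1, hu2⟩ := Elift X x₁ x₂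
      refine ⟨eComp catE u' k, ?_, ?_⟩
      · rw [hrt₁, e_assoc, ← e_assoc catE k hhat qt₁, hk2, e_id_comp, hu1]
      · rw [hrt₂, e_assoc, ← e_assoc catE k hhat qt₂, hk2, e_id_comp, hu2]
    have Uniq : ∀ (u v : EHom catE X Pr),
        eComp catE u rt₁ = eComp catE v rt₁ → eComp catE u rt₂ = eComp catE v rt₂ →
          u = v := by
      intro u v h1 h2
      have huv : eComp catE u hhat = eComp catE v hhat := by
        apply Eext
        · rw [e_assoc, e_assoc, ← hrt₁, h1]
        · rw [e_assoc, e_assoc, ← hrt₂, h2]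
      calc u = eComp catE u (eId catE Pr) := (e_comp_id catE u).symm
        _ = eComp catE u (eComp catE hhat k) := by rw [hk1]
        _ = eComp catE (eComp catE u hhat) k := (e_assoc catE _ _ _).symm
        _ = eComp catE (eComp catE v hhat) k := by rw [huv]
        _ = eComp catE v (eComp catE hhat k) := e_assoc catE _ _ _
        _ = v := by rw [hk1, e_comp_id]
    obtain ⟨ftil, hmemf⟩ := hfull f
    have key₁ : ∀ c : D.obj (FactObj.mk f), eComp catE (act f c ftil) rt₁ =
        act (f ≫ p₁) (D.map (natPost f p₁) c) (eComp catE ftil rt₁) := by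
      intro c
      conv_lhs => rw [← hact_zero p₁ rt₁]
      rw [hcompat, map_zero, add_zero]
    have key₂ : ∀ c : D.obj (FactObj.mk f), eComp catE (act f c ftil) rt₂ =
        act (f ≫ p₂) (D.map (natPost f p₂) c) (eComp catE ftil rt₂) := by
      intro c
      conv_lhs => rw [← hact_zero p₂ rt₂]
      rw [hcompat, map_zero, add_zero]
    have hm₁ : inFib catE P hobj (f ≫ p₁) (eComp catE ftil rt₁) :=
      inFib_comp catE P hobj hmemf hr₁
    have hm₂ : inFib catE P hobj (f ≫ p₂) (eComp catE ftil rt₂) :=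
      inFib_comp catE P hobj hmemf hr₂
    constructor
    · -- injectivity
      intro a b hab
      have ha1 : D.map (natPost f p₁) a = D.map (natPost f p₁) b :=
        congrArg Prod.fst hab
      have ha2 : D.map (natPost f p₂) a = D.map (natPost f p₂) b :=
        congrArg Prod.snd hab
      have : act f a ftil = act f b ftil := by
        apply Uniq
        · rw [key₁ a, key₁ b, ha1]
        · rw [key₂ a, key₂ b, ha2]
      exact act_inj catE P hobj D act hact_zero hact_add hfree a b ftil hmemf this
    · -- surjectivity
      rintro ⟨a₁, a₂⟩
      set x₁ := act (f ≫ p₁) a₁ (eComp catE ftil rt₁) with hx₁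
      set x₂ := act (f ≫ p₂) a₂ (eComp catE ftil rt₂) with hx₂
      obtain ⟨g, hg1, hg2⟩ := Ex x₁ x₂
      have hx₁mem : inFib catE P hobj (f ≫ p₁) x₁ := hact_mem _ _ _ hm₁
      have hx₂mem : inFib catE P hobj (f ≫ p₂) x₂ := hact_mem _ _ _ hm₂
      have hgb₁ : eproj catE P hobj g ≫ p₁ = f ≫ p₁ := by
        have h' := inFib_comp catE P hobj (inFib_eproj catE P hobj g) hr₁
        rw [hg1] at h'
        exact inFib_base_eq catE P hobj h' hx₁mem
      have hgb₂ : eproj catE P hobj g ≫ p₂ = f ≫ p₂ := by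
        have h' := inFib_comp catE P hobj (inFib_eproj catE P hobj g) hr₂
        rw [hg2] at h'
        exact inFib_base_eq catE P hobj h' hx₂mem
      have hgf : eproj catE P hobj g = f :=
        BinaryFan.IsLimit.hom_ext hl (by simpa using hgb₁) (by simpa using hgb₂)
      have gmem : inFib catE P hobj f g := by
        have := inFib_eproj catE P hobj g; rwa [hgf] at this
      obtain ⟨c, hc⟩ := htrans f ftil g hmemf gmem
      refine ⟨c, ?_⟩
      have e₁ : act (f ≫ p₁) (D.map (natPost f p₁) c) (eComp catE ftil rt₁) =
          act (f ≫ p₁) a₁ (eComp catE ftil rt₁) := by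
        rw [← key₁ c, hc, hg1, hx₁]
      have e₂ : act (f ≫ p₂) (D.map (natPost f p₂) c) (eComp catE ftil rt₂) =
          act (f ≫ p₂) a₂ (eComp catE ftil rt₂) := by
        rw [← key₂ c, hc, hg2, hx₂]
      have c₁ := act_inj catE P hobj D act hact_zero hact_add hfree _ _ _ hm₁ e₁
      have c₂ := act_inj catE P hobj D act hact_zero hact_add hfree _ _ _ hm₂ e₂
      show (_, _) = (_, _)
      rw [c₁, c₂]

end BWAux

/-- **Linear extensions of categories and cartesian natural systems.**
Let `0 → D → E →^P A → 0` be a linear extension of a category `A` with finite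
products by a natural system `D`: `P` is identity on objects and full, each fiber
`P⁻¹(f)` carries a transitive and effective action of the abelian group `D_f`, and
`(a + f̃) ≫ (b + g̃) = (g·a + f·b) + f̃ ≫ g̃` holds.  Then `D` is cartesian if and
only if `E` has finite products and `P` preserves them. -/
theorem stmt11 [HasFiniteProducts C] (catE : CatOn.{v} C)
    (P : @Functor C catE.cat C catA)
    (hobj : ∀ X : C, eObj catE P X = X)
    (D : NaturalSystem C)
    (act : ∀ {X Y : C} (f : X ⟶ Y),
      D.obj (FactObj.mk f) → EHom catE X Y → EHom catE X Y)
    (hfull : ∀ {X Y : C} (f : X ⟶ Y), ∃ ft, inFib catE P hobj f ft)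
    (hact_mem : ∀ {X Y : C} (f : X ⟶ Y) (a : D.obj (FactObj.mk f)) (ft : EHom catE X Y),
      inFib catE P hobj f ft → inFib catE P hobj f (act f a ft))
    (hact_zero : ∀ {X Y : C} (f : X ⟶ Y) (ft : EHom catE X Y), act f 0 ft = ft)
    (hact_add : ∀ {X Y : C} (f : X ⟶ Y) (a b : D.obj (FactObj.mk f))
      (ft : EHom catE X Y), act f (a + b) ft = act f a (act f b ft))
    (htrans : ∀ {X Y : C} (f : X ⟶ Y) (ft ft' : EHom catE X Y),
      inFib catE P hobj f ft → inFib catE P hobj f ft' → ∃ a, act f a ft = ft')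
    (hfree : ∀ {X Y : C} (f : X ⟶ Y) (a : D.obj (FactObj.mk f)) (ft : EHom catE X Y),
      inFib catE P hobj f ft → act f a ft = ft → a = 0)
    (hcompat : ∀ {X Y Z : C} (f : X ⟶ Y) (g : Y ⟶ Z)
      (a : D.obj (FactObj.mk f)) (b : D.obj (FactObj.mk g))
      (ft : EHom catE X Y) (gt : EHom catE Y Z),
      eComp catE (act f a ft) (act g b gt) =
        act (f ≫ g) (D.map (natPost f g) a + D.map (natPre f g) b) (eComp catE ft gt)) :
    IsCartesianNS D ↔
      (@HasFiniteProducts C catE.cat ∧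
        Nonempty (@PreservesFiniteProducts C catE.cat C catA P)) := by
  constructor
  · intro hD
    exact BWAux.dir1 catE P hobj D act hfull hact_mem hact_zero htrans hfree hcompat hD
  · rintro ⟨hE, ⟨hP⟩⟩
    exact BWAux.dir2 catE P hobj D act hfull hact_mem hact_zero hact_add htrans hfree
      hcompat hE hP
end LinearExtension
end

section
/- Let A be a theory (small category with finite products) and M a model of A (product-preserving functor A → Set). The functor Der(M;−) on the category Ab(A-mod/M) of abelian group objects over M, assigning to p : B → M the abelian group of sections s : M → B of p in A-mod, is representable: there exists an object Ω¹_M of Ab(A-mod/M) with Der(M;B) ≅ Hom(Ω¹_M, B) naturally in B. -/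
open CategoryTheory CategoryTheory.Limits

/-- The category `A-mod` of models of a theory `A` (a small category with finite
products): product-preserving functors `A ⥤ Type`. -/
abbrev AMod (A : Type) [SmallCategory A] [HasFiniteProducts A] : Type 1 :=
  ObjectProperty.FullSubcategory (fun F : A ⥤ Type => Nonempty (PreservesFiniteProducts F))

universe v u

/-- An abelian group object in a category `𝒟`, described via its functor of points:
an object `pt` with natural abelian group structures on all `Hom(T, pt)`. -/
structure AbGroupObject (𝒟 : Type u) [Category.{v} 𝒟] where
  pt : 𝒟
  add : ∀ {T : 𝒟}, (T ⟶ pt) → (T ⟶ pt) → (T ⟶ pt)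
  zero : ∀ T : 𝒟, (T ⟶ pt)
  neg : ∀ {T : 𝒟}, (T ⟶ pt) → (T ⟶ pt)
  add_assoc : ∀ {T : 𝒟} (f g h : T ⟶ pt), add (add f g) h = add f (add g h)
  add_comm : ∀ {T : 𝒟} (f g : T ⟶ pt), add f g = add g f
  zero_add : ∀ {T : 𝒟} (f : T ⟶ pt), add (zero T) f = f
  neg_add_cancel : ∀ {T : 𝒟} (f : T ⟶ pt), add (neg f) f = zero T
  add_natural : ∀ {T T' : 𝒟} (h : T ⟶ T') (f g : T' ⟶ pt),
    h ≫ add f g = add (h ≫ f) (h ≫ g)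
  zero_natural : ∀ {T T' : 𝒟} (h : T ⟶ T'), h ≫ zero T' = zero T

/-- Morphisms of abelian group objects: morphisms compatible with the addition. -/
def AbHom {𝒟 : Type u} [Category.{v} 𝒟] (B B' : AbGroupObject 𝒟) : Type _ :=
  { φ : B.pt ⟶ B'.pt //
    ∀ {T : 𝒟} (f g : T ⟶ B.pt), B.add f g ≫ φ = B'.add (f ≫ φ) (g ≫ φ) }

/-- Composition of morphisms of abelian group objects. -/
def AbHom.comp {𝒟 : Type u} [Category.{v} 𝒟] {B₁ B₂ B₃ : AbGroupObject 𝒟}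
    (φ : AbHom B₁ B₂) (ψ : AbHom B₂ B₃) : AbHom B₁ B₃ :=
  ⟨φ.1 ≫ ψ.1, fun f g => by
    rw [← Category.assoc, φ.2, ψ.2, Category.assoc, Category.assoc]⟩

namespace Stmt17
open Opposite

variable {A : Type} [SmallCategory A] [HasFiniteProducts A]

instance (X : AMod A) : PreservesFiniteProducts X.obj := X.property.some

section PP
variable (F : A ⥤ Type) [PreservesFiniteProducts F]

/-- points of a product -/
noncomputable def pe (a c : A) : F.obj (a ⨯ c) ≃ F.obj a × F.obj c :=
  ((PreservesLimitPair.iso F a c) ≪≫ Types.binaryProductIso _ _).toEquiv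

lemma pe_fst {a c : A} (x : F.obj (a ⨯ c)) :
    (pe F a c x).1 = F.map prod.fst x := by
  have h1 := types_congr_hom (Types.binaryProductIso_hom_comp_fst (F.obj a) (F.obj c))
    ((PreservesLimitPair.iso F a c).hom x)
  have h2 := types_congr_hom (prodComparison_fst (F := F) (A := a) (B := c)) x
  simp only [types_comp_apply] at h1 h2
  simpa [pe, PreservesLimitPair.iso_hom, h2] using h1

lemma pe_snd {a c : A} (x : F.obj (a ⨯ c)) :
    (pe F a c x).2 = F.map prod.snd x := by
  have h1 := types_congr_hom (Types.binaryProductIso_hom_comp_snd (F.obj a) (F.obj c))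
    ((PreservesLimitPair.iso F a c).hom x)
  have h2 := types_congr_hom (prodComparison_snd (F := F) (A := a) (B := c)) x
  simp only [types_comp_apply] at h1 h2
  simpa [pe, PreservesLimitPair.iso_hom, h2] using h1

/-- pairing of points -/
noncomputable def mp {a c : A} (u : F.obj a) (v : F.obj c) : F.obj (a ⨯ c) :=
  (pe F a c).symm (u, v)

@[simp] lemma map_fst_mp {a c : A} (u : F.obj a) (v : F.obj c) :
    F.map prod.fst (mp F u v) = u := by
  rw [← pe_fst]; simp [mp]

@[simp] lemma map_snd_mp {a c : A} (u : F.obj a) (v : F.obj c) :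
    F.map prod.snd (mp F u v) = v := by
  rw [← pe_snd]; simp [mp]

lemma Fp_ext {a c : A} {x y : F.obj (a ⨯ c)}
    (h1 : F.map prod.fst x = F.map prod.fst y)
    (h2 : F.map prod.snd x = F.map prod.snd y) : x = y := by
  apply (pe F a c).injective
  apply Prod.ext <;> simp [pe_fst, pe_snd, h1, h2]

/-- points of the terminal object -/
noncomputable def te : F.obj (⊤_ A) ≃ PUnit :=
  ((PreservesTerminal.iso F) ≪≫ Types.terminalIso).toEquiv

lemma te_sub : Subsingleton (F.obj (⊤_ A)) := (te F).subsingleton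

end PP

variable (M : AMod A)

/-- representable model -/
noncomputable def Ya (a : A) : AMod A := ⟨coyoneda.obj (op a), ⟨inferInstance⟩⟩

/-- the morphism `Ya a ⟶ M` classified by a point `m` -/
noncomputable def yelHom {a : A} (m : M.obj.obj a) : Ya a ⟶ M :=
  ObjectProperty.homMk
  { app := fun _ => TypeCat.ofHom (fun f => M.obj.map f m)
    naturality := fun _ _ g => by
      ext f
      exact (FunctorToTypes.map_comp_apply M.obj f g m) }

/-- the object of `Over M` given by a representable with a point of `M` -/
noncomputable def yel {a : A} (m : M.obj.obj a) : Over M := Over.mk (yelHom M m)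

/-- evaluation of a morphism from a representable -/
noncomputable def elm {a : A} {m : M.obj.obj a} {X : Over M} (φ : yel M m ⟶ X) :
    X.left.obj.obj a := φ.left.hom.app a (𝟙 a)

lemma app_eq {a : A} {m : M.obj.obj a} {X : Over M} (φ : yel M m ⟶ X)
    {c : A} (f : a ⟶ c) : φ.left.hom.app c f = X.left.obj.map f (elm M φ) := by
  have := NatTrans.naturality_apply φ.left.hom f (𝟙 a)
  rw [elm, ← this]
  have : (yel M m).left.obj.map f (𝟙 a) = 𝟙 a ≫ f := rfl
  rw [this, Category.id_comp]

lemma elm_over {a : A} {m : M.obj.obj a} {X : Over M} (φ : yel M m ⟶ X) :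
    X.hom.hom.app a (elm M φ) = m := by
  have h0 := types_congr_hom (NatTrans.congr_app (congrArg InducedCategory.Hom.hom (Over.w φ)) a) (𝟙 a)
  have h : (yel M m).hom.hom.app a (𝟙 a) = M.obj.map (𝟙 a) m := rfl
  rw [elm]
  calc X.hom.hom.app a (φ.left.hom.app a (𝟙 a)) = (yel M m).hom.hom.app a (𝟙 a) := h0
    _ = m := by rw [h, FunctorToTypes.map_id_apply]

lemma hom_ext {a : A} {m : M.obj.obj a} {X : Over M} {φ ψ : yel M m ⟶ X}
    (h : elm M φ = elm M ψ) : φ = ψ := by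
  apply Over.OverMorphism.ext
  ext c f
  show φ.left.hom.app c f = ψ.left.hom.app c f
  rw [app_eq M φ f, app_eq M ψ f, h]

/-- morphism from a representable classified by an element -/
noncomputable def toHom {a : A} {m : M.obj.obj a} {X : Over M} (x : X.left.obj.obj a)
    (hx : X.hom.hom.app a x = m) : yel M m ⟶ X :=
  Over.homMk
    (ObjectProperty.homMk
    { app := fun _ => TypeCat.ofHom (fun f => X.left.obj.map f x)
      naturality := fun _ _ g => by
        ext f
        have : (yel M m).left.obj.map g f = f ≫ g := rfl
        simp only [types_comp_apply, TypeCat.ofHom_apply, this]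
        exact (FunctorToTypes.map_comp_apply X.left.obj f g x) })
    (by
      ext c f
      show X.hom.hom.app c (X.left.obj.map f x) = M.obj.map f m
      rw [← hx]
      exact NatTrans.naturality_apply X.hom.hom f x)

@[simp] lemma elm_toHom {a : A} {m : M.obj.obj a} {X : Over M} (x : X.left.obj.obj a)
    (hx : X.hom.hom.app a x = m) : elm M (toHom M x hx) = x := by
  simp only [elm, toHom]
  exact FunctorToTypes.map_id_apply X.left.obj x

lemma elm_comp {a : A} {m : M.obj.obj a} {X X' : Over M} (φ : yel M m ⟶ X)
    (ψ : X ⟶ X') : elm M (φ ≫ ψ) = ψ.left.hom.app a (elm M φ) := rfl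

/-- restriction map between representables over `M` -/
noncomputable def ovMap {x b : A} (g : x ⟶ b) {m : M.obj.obj x} {n : M.obj.obj b}
    (h : M.obj.map g m = n) : yel M n ⟶ yel M m :=
  toHom M (X := yel M m) ((g : x ⟶ b) : (yel M m).left.obj.obj b)
    (by
      have : (yel M m).hom.hom.app b g = M.obj.map g m := rfl
      rw [this, h])

lemma elm_ovMap {x b : A} (g : x ⟶ b) {m : M.obj.obj x} {n : M.obj.obj b}
    (h : M.obj.map g m = n) {X : Over M} (φ : yel M m ⟶ X) :
    elm M (ovMap M g h ≫ φ) = X.left.obj.map g (elm M φ) := by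
  rw [elm_comp]
  have h1 : elm M (ovMap M g h) = g ≫ 𝟙 b := rfl
  rw [h1, Category.comp_id]
  exact app_eq M φ g

/-! ### Fiber groups -/

noncomputable instance fibGrp (B : AbGroupObject (Over M)) (T : Over M) :
    AddCommGroup (T ⟶ B.pt) := by
  letI z : Zero (T ⟶ B.pt) := ⟨B.zero T⟩
  letI ad : Add (T ⟶ B.pt) := ⟨B.add⟩
  letI ng : Neg (T ⟶ B.pt) := ⟨B.neg⟩
  exact
    { add := B.add
      zero := B.zero T
      neg := B.neg
      add_assoc := B.add_assoc
      zero_add := B.zero_add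
      add_zero := fun f => (B.add_comm f (B.zero T)).trans (B.zero_add f)
      add_comm := B.add_comm
      neg_add_cancel := B.neg_add_cancel
      nsmul := nsmulRec
      zsmul := zsmulRec }

lemma comp_add {B : AbGroupObject (Over M)} {T T' : Over M} (χ : T ⟶ T')
    (v v' : T' ⟶ B.pt) : χ ≫ (v + v') = χ ≫ v + χ ≫ v' := B.add_natural χ v v'

lemma comp_zero' {B : AbGroupObject (Over M)} {T T' : Over M} (χ : T ⟶ T') :
    χ ≫ (0 : T' ⟶ B.pt) = 0 := B.zero_natural χ

/-- precomposition as an additive map -/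
noncomputable def preC {B : AbGroupObject (Over M)} {T T' : Over M} (χ : T ⟶ T') :
    (T' ⟶ B.pt) →+ (T ⟶ B.pt) :=
  AddMonoidHom.mk' (fun v => χ ≫ v) (fun u v => B.add_natural χ u v)

/-! ### Pairing -/

noncomputable def pairU {X : Over M} {a c : A} {n : M.obj.obj (a ⨯ c)}
    {m : M.obj.obj a} {k : M.obj.obj c}
    (h1 : M.obj.map prod.fst n = m) (h2 : M.obj.map prod.snd n = k)
    (u : yel M m ⟶ X) (v : yel M k ⟶ X) : yel M n ⟶ X :=
  toHom M (mp X.left.obj (elm M u) (elm M v)) (by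
    apply Fp_ext M.obj
    · have hn : X.hom.hom.app a (X.left.obj.map prod.fst (mp X.left.obj (elm M u) (elm M v)))
          = M.obj.map prod.fst (X.hom.hom.app (a ⨯ c) (mp X.left.obj (elm M u) (elm M v))) :=
        NatTrans.naturality_apply X.hom.hom prod.fst _
      rw [← hn, map_fst_mp, elm_over, ← h1]
    · have hn : X.hom.hom.app c (X.left.obj.map prod.snd (mp X.left.obj (elm M u) (elm M v)))
          = M.obj.map prod.snd (X.hom.hom.app (a ⨯ c) (mp X.left.obj (elm M u) (elm M v))) :=
        NatTrans.naturality_apply X.hom.hom prod.snd _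
      rw [← hn, map_snd_mp, elm_over, ← h2])

lemma pairU_fst {X : Over M} {a c : A} {n : M.obj.obj (a ⨯ c)}
    {m : M.obj.obj a} {k : M.obj.obj c} (h1 : M.obj.map prod.fst n = m)
    (h2 : M.obj.map prod.snd n = k) (u : yel M m ⟶ X) (v : yel M k ⟶ X) :
    ovMap M prod.fst h1 ≫ pairU M h1 h2 u v = u := by
  apply hom_ext M
  rw [elm_ovMap]
  simp only [pairU, elm_toHom]
  rw [map_fst_mp]

lemma pairU_snd {X : Over M} {a c : A} {n : M.obj.obj (a ⨯ c)}
    {m : M.obj.obj a} {k : M.obj.obj c} (h1 : M.obj.map prod.fst n = m)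
    (h2 : M.obj.map prod.snd n = k) (u : yel M m ⟶ X) (v : yel M k ⟶ X) :
    ovMap M prod.snd h2 ≫ pairU M h1 h2 u v = v := by
  apply hom_ext M
  rw [elm_ovMap]
  simp only [pairU, elm_toHom]
  rw [map_snd_mp]

lemma fib_ext {X : Over M} {a c : A} {n : M.obj.obj (a ⨯ c)} {w w' : yel M n ⟶ X}
    (e1 : ovMap M prod.fst rfl ≫ w = ovMap M prod.fst rfl ≫ w')
    (e2 : ovMap M prod.snd rfl ≫ w = ovMap M prod.snd rfl ≫ w') : w = w' := by
  apply hom_ext M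
  apply Fp_ext X.left.obj
  · rw [← elm_ovMap M prod.fst rfl w, ← elm_ovMap M prod.fst rfl w', e1]
  · rw [← elm_ovMap M prod.snd rfl w, ← elm_ovMap M prod.snd rfl w', e2]

lemma pairU_add {B : AbGroupObject (Over M)} {a c : A} {n : M.obj.obj (a ⨯ c)}
    {m : M.obj.obj a} {k : M.obj.obj c} (h1 : M.obj.map prod.fst n = m)
    (h2 : M.obj.map prod.snd n = k) (u u' : yel M m ⟶ B.pt) (v v' : yel M k ⟶ B.pt) :
    pairU M h1 h2 (u + u') (v + v') = pairU M h1 h2 u v + pairU M h1 h2 u' v' := by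
  subst h1; subst h2
  apply fib_ext M
  · rw [comp_add, pairU_fst, pairU_fst, pairU_fst]
  · rw [comp_add, pairU_snd, pairU_snd, pairU_snd]

lemma pairU_zero {B : AbGroupObject (Over M)} {a c : A} {n : M.obj.obj (a ⨯ c)}
    {m : M.obj.obj a} {k : M.obj.obj c} (h1 : M.obj.map prod.fst n = m)
    (h2 : M.obj.map prod.snd n = k) :
    pairU M h1 h2 (0 : yel M m ⟶ B.pt) (0 : yel M k ⟶ B.pt) = 0 := by
  subst h1; subst h2
  apply fib_ext M
  · rw [pairU_fst, comp_zero']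
  · rw [pairU_snd, comp_zero']

/-! ### The generators and the universal relations -/

/-- The terminal object of `Over M`. -/
abbrev T0 : Over M := Over.mk (𝟙 M)

noncomputable def toT0 {a : A} (m : M.obj.obj a) : yel M m ⟶ T0 M :=
  toHom M (X := T0 M) m rfl

/-- value of a section at a point -/
noncomputable def secAt (B : AbGroupObject (Over M)) (s : T0 M ⟶ B.pt) {a : A}
    (m : M.obj.obj a) : yel M m ⟶ B.pt := toT0 M m ≫ s

/-- Generators for the module of differentials. -/
structure Gen (b : A) (n : M.obj.obj b) where
  a : A
  c : A
  m : M.obj.obj a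
  k : M.obj.obj c
  g : a ⨯ c ⟶ b
  hg : M.obj.map g (mp M.obj m k) = n

/-- Evaluation of formal sums of generators in an abelian group object with a section. -/
noncomputable def Phi (B : AbGroupObject (Over M)) (s : T0 M ⟶ B.pt) (b : A)
    (n : M.obj.obj b) : FreeAbelianGroup (Gen M b n) →+ (yel M n ⟶ B.pt) :=
  FreeAbelianGroup.lift (fun γ =>
    ovMap M γ.g γ.hg ≫ pairU M (map_fst_mp M.obj γ.m γ.k) (map_snd_mp M.obj γ.m γ.k)
      (secAt M B s γ.m) (0 : yel M γ.k ⟶ B.pt))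

lemma Phi_of (B : AbGroupObject (Over M)) (s : T0 M ⟶ B.pt) {b : A}
    {n : M.obj.obj b} (γ : Gen M b n) :
    Phi M B s b n (FreeAbelianGroup.of γ) =
      ovMap M γ.g γ.hg ≫ pairU M (map_fst_mp M.obj γ.m γ.k) (map_snd_mp M.obj γ.m γ.k)
        (secAt M B s γ.m) (0 : yel M γ.k ⟶ B.pt) :=
  FreeAbelianGroup.lift_apply_of ..

/-- The subgroup of universal relations. -/
def Rel (b : A) (n : M.obj.obj b) : AddSubgroup (FreeAbelianGroup (Gen M b n)) where
  carrier := {x | ∀ (B : AbGroupObject (Over M)) (s : T0 M ⟶ B.pt), Phi M B s b n x = 0}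
  add_mem' := fun hx hy B s => by rw [map_add, hx B s, hy B s, add_zero]
  zero_mem' := fun B s => map_zero _
  neg_mem' := fun {x} hx B s => by rw [map_neg, hx B s, neg_zero]

/-- The fibers of the module of differentials. -/
def W (b : A) (n : M.obj.obj b) := FreeAbelianGroup (Gen M b n) ⧸ Rel M b n

noncomputable instance {b : A} {n : M.obj.obj b} : AddCommGroup (W M b n) :=
  QuotientAddGroup.Quotient.addCommGroup _

/-- class of a formal sum -/
def mkW {b : A} {n : M.obj.obj b} : FreeAbelianGroup (Gen M b n) →+ W M b n :=
  QuotientAddGroup.mk' _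

lemma mkW_surjective {b : A} {n : M.obj.obj b} :
    Function.Surjective (mkW M (b := b) (n := n)) :=
  QuotientAddGroup.mk'_surjective _

/-- evaluation on the quotient -/
noncomputable def PhiQ (B : AbGroupObject (Over M)) (s : T0 M ⟶ B.pt) (b : A)
    (n : M.obj.obj b) : W M b n →+ (yel M n ⟶ B.pt) :=
  QuotientAddGroup.lift _ (Phi M B s b n) (fun x hx => hx B s)

lemma PhiQ_mkW (B : AbGroupObject (Over M)) (s : T0 M ⟶ B.pt) {b : A}
    {n : M.obj.obj b} (x : FreeAbelianGroup (Gen M b n)) :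
    PhiQ M B s b n (mkW M x) = Phi M B s b n x := rfl

lemma wext {b : A} {n : M.obj.obj b} {w w' : W M b n}
    (hy : ∀ B s, PhiQ M B s b n w = PhiQ M B s b n w') : w = w' := by
  have h0 : ∀ u : W M b n, (∀ B s, PhiQ M B s b n u = 0) → u = 0 := by
    intro u hu
    obtain ⟨x, rfl⟩ := mkW_surjective M u
    exact (QuotientAddGroup.eq_zero_iff x).mpr (fun B s => hu B s)
  have h1 := h0 (w - w') (fun B s => by rw [map_sub, hy B s, sub_self])
  rwa [sub_eq_zero] at h1

/-! ### Functoriality of W -/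

lemma ovMap_comp {x b b' : A} (g : x ⟶ b) (g' : b ⟶ b') {m : M.obj.obj x}
    {n : M.obj.obj b} {n' : M.obj.obj b'} (h : M.obj.map g m = n)
    (h' : M.obj.map g' n = n') (h2 : M.obj.map (g ≫ g') m = n') :
    ovMap M (g ≫ g') h2 = ovMap M g' h' ≫ ovMap M g h := by
  apply hom_ext M
  rw [elm_ovMap]
  show (g ≫ g') ≫ 𝟙 b' = (g ≫ 𝟙 b) ≫ g'
  simp

noncomputable def GenMap {b b' : A} (g' : b ⟶ b') {n : M.obj.obj b} {n' : M.obj.obj b'}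
    (h : M.obj.map g' n = n') : Gen M b n → Gen M b' n' :=
  fun γ => ⟨γ.a, γ.c, γ.m, γ.k, γ.g ≫ g',
    by rw [FunctorToTypes.map_comp_apply, γ.hg, h]⟩

lemma Phi_map (B : AbGroupObject (Over M)) (s : T0 M ⟶ B.pt) {b b' : A}
    (g' : b ⟶ b') {n : M.obj.obj b} {n' : M.obj.obj b'} (h : M.obj.map g' n = n')
    (x : FreeAbelianGroup (Gen M b n)) :
    Phi M B s b' n' (FreeAbelianGroup.map (GenMap M g' h) x)
      = ovMap M g' h ≫ Phi M B s b n x := by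
  refine FreeAbelianGroup.induction_on x ?_ ?_ ?_ ?_
  · simp only [map_zero]
    rw [comp_zero']
  · intro γ
    rw [FreeAbelianGroup.map_of_apply, Phi_of, Phi_of, ← Category.assoc,
      ← ovMap_comp M γ.g g' γ.hg h (GenMap M g' h γ).hg]
    rfl
  · intro γ hγ
    rw [map_neg, map_neg, map_neg, hγ]
    show _ = preC M (ovMap M g' h) (- Phi M B s b n (FreeAbelianGroup.of γ))
    rw [map_neg]
    rfl
  · intro y z hy hz
    rw [map_add, map_add, map_add, hy, hz]
    exact (comp_add M _ _ _).symm

/-- functorial transition maps of `W` -/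
noncomputable def Wmap {b b' : A} (g' : b ⟶ b') {n : M.obj.obj b} {n' : M.obj.obj b'}
    (h : M.obj.map g' n = n') : W M b n →+ W M b' n' :=
  QuotientAddGroup.map _ _ (FreeAbelianGroup.map (GenMap M g' h))
    (fun x hx B s => by
      rw [Phi_map, hx B s, comp_zero'])

lemma Wmap_mkW {b b' : A} (g' : b ⟶ b') {n : M.obj.obj b} {n' : M.obj.obj b'}
    (h : M.obj.map g' n = n') (x : FreeAbelianGroup (Gen M b n)) :
    Wmap M g' h (mkW M x) = mkW M (FreeAbelianGroup.map (GenMap M g' h) x) := rfl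

lemma PhiQ_Wmap (B : AbGroupObject (Over M)) (s : T0 M ⟶ B.pt) {b b' : A}
    (g' : b ⟶ b') {n : M.obj.obj b} {n' : M.obj.obj b'} (h : M.obj.map g' n = n')
    (w : W M b n) :
    PhiQ M B s b' n' (Wmap M g' h w) = ovMap M g' h ≫ PhiQ M B s b n w := by
  obtain ⟨x, rfl⟩ := mkW_surjective M w
  rw [Wmap_mkW, PhiQ_mkW, PhiQ_mkW, Phi_map]

/-! ### Element-level evaluation -/

noncomputable def elW (B : AbGroupObject (Over M)) (s : T0 M ⟶ B.pt) {b : A}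
    {n : M.obj.obj b} (w : W M b n) : B.pt.left.obj.obj b :=
  elm M (PhiQ M B s b n w)

lemma welext {b : A} {n : M.obj.obj b} {w w' : W M b n}
    (h : ∀ B s, elW M B s w = elW M B s w') : w = w' :=
  wext M (fun B s => hom_ext M (h B s))

lemma elW_Wmap (B : AbGroupObject (Over M)) (s : T0 M ⟶ B.pt) {b b' : A}
    (g' : b ⟶ b') {n : M.obj.obj b} {n' : M.obj.obj b'} (h : M.obj.map g' n = n')
    (w : W M b n) :
    elW M B s (Wmap M g' h w) = B.pt.left.obj.map g' (elW M B s w) := by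
  rw [elW, PhiQ_Wmap, elm_ovMap]
  rfl

/-- transport of `W` along equality of points -/
noncomputable def castWH {b : A} {n n' : M.obj.obj b} (h : n = n') :
    W M b n →+ W M b n' := by subst h; exact AddMonoidHom.id _

@[simp] lemma castWH_rfl {b : A} {n : M.obj.obj b} (w : W M b n) :
    castWH M rfl w = w := rfl

@[simp] lemma elW_cast (B : AbGroupObject (Over M)) (s : T0 M ⟶ B.pt) {b : A}
    {n n' : M.obj.obj b} (h : n = n') (w : W M b n) :
    elW M B s (castWH M h w) = elW M B s w := by subst h; rfl

/-- The trivial abelian group object over `M`. -/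
noncomputable def B0 : AbGroupObject (Over M) where
  pt := T0 M
  add f _ := f
  zero T := Over.mkIdTerminal.from T
  neg f := f
  add_assoc _ _ _ := Over.mkIdTerminal.hom_ext _ _
  add_comm _ _ := Over.mkIdTerminal.hom_ext _ _
  zero_add _ := Over.mkIdTerminal.hom_ext _ _
  neg_add_cancel _ := Over.mkIdTerminal.hom_ext _ _
  add_natural _ _ _ := Over.mkIdTerminal.hom_ext _ _
  zero_natural _ := Over.mkIdTerminal.hom_ext _ _

noncomputable def elP (B : AbGroupObject (Over M)) (s : T0 M ⟶ B.pt) {b : A}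
    (x : Σ n : M.obj.obj b, W M b n) : B.pt.left.obj.obj b :=
  elW M B s x.2

lemma elP_B0 {b : A} (x : Σ n : M.obj.obj b, W M b n) :
    elP M (B0 M) (𝟙 (T0 M)) x = x.1 :=
  elm_over M (PhiQ M (B0 M) (𝟙 (T0 M)) b x.1 x.2)

/-- master extensionality for elements of the module of differentials -/
lemma sext {b : A} {x y : Σ n : M.obj.obj b, W M b n}
    (h : ∀ B s, elP M B s x = elP M B s y) : x = y := by
  obtain ⟨n, w⟩ := x; obtain ⟨n', w'⟩ := y
  have hn : n = n' := by
    have h0 := h (B0 M) (𝟙 (T0 M))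
    rw [elP_B0, elP_B0] at h0
    exact h0
  subst hn
  have hw : w = w' := welext M (fun B s => h B s)
  rw [hw]

/-! ### The functor of differentials -/

lemma mp_unique (F : A ⥤ Type) [PreservesFiniteProducts F] {a c : A}
    {x : F.obj (a ⨯ c)} {u : F.obj a} {v : F.obj c}
    (hu : F.map prod.fst x = u) (hv : F.map prod.snd x = v) : x = mp F u v := by
  apply Fp_ext F <;> simp [hu, hv]

lemma elm_zero_map {B : AbGroupObject (Over M)} {x b : A} (g : x ⟶ b)
    {m : M.obj.obj x} {n : M.obj.obj b} (h : M.obj.map g m = n) :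
    B.pt.left.obj.map g (elm M (0 : yel M m ⟶ B.pt)) = elm M (0 : yel M n ⟶ B.pt) := by
  rw [← elm_ovMap M g h, comp_zero']

lemma elm_pairU {X : Over M} {a c : A} {n : M.obj.obj (a ⨯ c)}
    {m : M.obj.obj a} {k : M.obj.obj c} (h1 : M.obj.map prod.fst n = m)
    (h2 : M.obj.map prod.snd n = k) (u : yel M m ⟶ X) (v : yel M k ⟶ X) :
    elm M (pairU M h1 h2 u v) = mp X.left.obj (elm M u) (elm M v) := by
  simp [pairU, elm_toHom]

lemma elm_Phi_of (B : AbGroupObject (Over M)) (s : T0 M ⟶ B.pt) {b : A}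
    {n : M.obj.obj b} (γ : Gen M b n) :
    elm M (Phi M B s b n (FreeAbelianGroup.of γ)) =
      B.pt.left.obj.map γ.g (mp B.pt.left.obj (elm M (secAt M B s γ.m))
        (elm M (0 : yel M γ.k ⟶ B.pt))) := by
  rw [Phi_of, elm_ovMap, elm_pairU]

/-- The underlying functor of the module of differentials. -/
@[reducible] noncomputable def OmF : A ⥤ Type where
  obj b := Σ n : M.obj.obj b, W M b n
  map g := TypeCat.ofHom (fun x => ⟨M.obj.map g x.1, Wmap M g rfl x.2⟩)
  map_id b := by
    ext x : 3
    refine sext M (fun B s => ?_)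
    show elW M B s (Wmap M (𝟙 b) rfl x.2) = elW M B s x.2
    rw [elW_Wmap, FunctorToTypes.map_id_apply]
  map_comp {b b' b''} f g := by
    ext x : 3
    refine sext M (fun B s => ?_)
    show elW M B s (Wmap M (f ≫ g) rfl x.2) = elW M B s (Wmap M g rfl (Wmap M f rfl x.2))
    rw [elW_Wmap, elW_Wmap, elW_Wmap, FunctorToTypes.map_comp_apply]

lemma elP_OmF_map (B : AbGroupObject (Over M)) (s : T0 M ⟶ B.pt) {b b' : A}
    (g : b ⟶ b') (x : (OmF M).obj b) :
    elP M B s ((OmF M).map g x) = B.pt.left.obj.map g (elP M B s x) :=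
  elW_Wmap M B s g rfl x.2

lemma sig_cast {b : A} {n n' : M.obj.obj b} (h : n = n') (w : W M b n) :
    (⟨n', castWH M h w⟩ : Σ nn : M.obj.obj b, W M b nn) = ⟨n, w⟩ := by
  subst h; rfl

/-! ### Product preservation of OmF -/

section Products

variable {b₁ b₂ : A} (N : M.obj.obj (b₁ ⨯ b₂))

/-- padding morphism -/
noncomputable def thet (a c e : A) : a ⨯ (c ⨯ e) ⟶ a ⨯ c :=
  prod.lift prod.fst (prod.snd ≫ prod.fst)

lemma iGen₁_pf (γ : Gen M b₁ (M.obj.map prod.fst N)) :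
    M.obj.map (prod.lift (thet γ.a γ.c b₂ ≫ γ.g) (prod.snd ≫ prod.snd))
      (mp M.obj γ.m (mp M.obj γ.k (M.obj.map prod.snd N))) = N := by
  have hθ : M.obj.map (thet γ.a γ.c b₂)
      (mp M.obj γ.m (mp M.obj γ.k (M.obj.map prod.snd N))) = mp M.obj γ.m γ.k := by
    apply Fp_ext M.obj
    · rw [← FunctorToTypes.map_comp_apply, thet, prod.lift_fst, map_fst_mp, map_fst_mp]
    · rw [← FunctorToTypes.map_comp_apply, thet, prod.lift_snd,
        FunctorToTypes.map_comp_apply, map_snd_mp, map_fst_mp, map_snd_mp]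
  apply Fp_ext M.obj
  · rw [← FunctorToTypes.map_comp_apply, prod.lift_fst, FunctorToTypes.map_comp_apply,
      hθ, γ.hg]
  · rw [← FunctorToTypes.map_comp_apply, prod.lift_snd, FunctorToTypes.map_comp_apply,
      map_snd_mp, map_snd_mp]

@[reducible] noncomputable def iGen₁ (γ : Gen M b₁ (M.obj.map prod.fst N)) : Gen M (b₁ ⨯ b₂) N :=
  ⟨γ.a, γ.c ⨯ b₂, γ.m, mp M.obj γ.k (M.obj.map prod.snd N),
    prod.lift (thet γ.a γ.c b₂ ≫ γ.g) (prod.snd ≫ prod.snd), iGen₁_pf M N γ⟩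

lemma iGen₂_pf (γ : Gen M b₂ (M.obj.map prod.snd N)) :
    M.obj.map (prod.lift (prod.snd ≫ prod.snd) (thet γ.a γ.c b₁ ≫ γ.g))
      (mp M.obj γ.m (mp M.obj γ.k (M.obj.map prod.fst N))) = N := by
  have hθ : M.obj.map (thet γ.a γ.c b₁)
      (mp M.obj γ.m (mp M.obj γ.k (M.obj.map prod.fst N))) = mp M.obj γ.m γ.k := by
    apply Fp_ext M.obj
    · rw [← FunctorToTypes.map_comp_apply, thet, prod.lift_fst, map_fst_mp, map_fst_mp]
    · rw [← FunctorToTypes.map_comp_apply, thet, prod.lift_snd,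
        FunctorToTypes.map_comp_apply, map_snd_mp, map_fst_mp, map_snd_mp]
  apply Fp_ext M.obj
  · rw [← FunctorToTypes.map_comp_apply, prod.lift_fst, FunctorToTypes.map_comp_apply,
      map_snd_mp, map_snd_mp]
  · rw [← FunctorToTypes.map_comp_apply, prod.lift_snd, FunctorToTypes.map_comp_apply,
      hθ, γ.hg]

@[reducible] noncomputable def iGen₂ (γ : Gen M b₂ (M.obj.map prod.snd N)) : Gen M (b₁ ⨯ b₂) N :=
  ⟨γ.a, γ.c ⨯ b₁, γ.m, mp M.obj γ.k (M.obj.map prod.fst N),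
    prod.lift (prod.snd ≫ prod.snd) (thet γ.a γ.c b₁ ≫ γ.g), iGen₂_pf M N γ⟩

variable (B : AbGroupObject (Over M)) (s : T0 M ⟶ B.pt)

/-- fiberwise inclusion for an abelian group object -/
noncomputable def iB₁ : (yel M (M.obj.map prod.fst N) ⟶ B.pt) →+ (yel M N ⟶ B.pt) :=
  AddMonoidHom.mk' (fun v => pairU M rfl rfl v (0 : yel M (M.obj.map prod.snd N) ⟶ B.pt))
    (fun u v => by rw [← pairU_add, add_zero])

noncomputable def iB₂ : (yel M (M.obj.map prod.snd N) ⟶ B.pt) →+ (yel M N ⟶ B.pt) :=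
  AddMonoidHom.mk' (fun v => pairU M rfl rfl (0 : yel M (M.obj.map prod.fst N) ⟶ B.pt) v)
    (fun u v => by rw [← pairU_add, add_zero])

lemma Phi_iGen₁ (γ : Gen M b₁ (M.obj.map prod.fst N)) :
    Phi M B s (b₁ ⨯ b₂) N (FreeAbelianGroup.of (iGen₁ M N γ)) =
      iB₁ M N B (Phi M B s b₁ _ (FreeAbelianGroup.of γ)) := by
  apply hom_ext M
  rw [elm_Phi_of]
  show _ = elm M (pairU M rfl rfl _ _)
  rw [elm_pairU, elm_Phi_of]
  dsimp only [iGen₁]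
  apply Fp_ext B.pt.left.obj
  · rw [← FunctorToTypes.map_comp_apply, prod.lift_fst, FunctorToTypes.map_comp_apply,
      map_fst_mp]
    have hmp : B.pt.left.obj.map (thet γ.a γ.c b₂)
        (mp B.pt.left.obj (elm M (secAt M B s γ.m))
          (elm M (0 : yel M (mp M.obj γ.k (M.obj.map prod.snd N)) ⟶ B.pt)))
        = mp B.pt.left.obj (elm M (secAt M B s γ.m)) (elm M (0 : yel M γ.k ⟶ B.pt)) := by
      apply mp_unique B.pt.left.obj
      · rw [← FunctorToTypes.map_comp_apply, thet, prod.lift_fst, map_fst_mp]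
      · rw [← FunctorToTypes.map_comp_apply, thet, prod.lift_snd,
          FunctorToTypes.map_comp_apply, map_snd_mp]
        exact elm_zero_map M prod.fst (map_fst_mp M.obj γ.k (M.obj.map prod.snd N))
    rw [hmp]
  · rw [← FunctorToTypes.map_comp_apply, prod.lift_snd, FunctorToTypes.map_comp_apply,
      map_snd_mp, map_snd_mp]
    exact elm_zero_map M prod.snd (map_snd_mp M.obj γ.k (M.obj.map prod.snd N))

lemma Phi_iGen₂ (γ : Gen M b₂ (M.obj.map prod.snd N)) :
    Phi M B s (b₁ ⨯ b₂) N (FreeAbelianGroup.of (iGen₂ M N γ)) =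
      iB₂ M N B (Phi M B s b₂ _ (FreeAbelianGroup.of γ)) := by
  apply hom_ext M
  rw [elm_Phi_of]
  show _ = elm M (pairU M rfl rfl _ _)
  rw [elm_pairU, elm_Phi_of]
  dsimp only [iGen₂]
  apply Fp_ext B.pt.left.obj
  · rw [← FunctorToTypes.map_comp_apply, prod.lift_fst, FunctorToTypes.map_comp_apply,
      map_snd_mp, map_fst_mp]
    exact elm_zero_map M prod.snd (map_snd_mp M.obj γ.k (M.obj.map prod.fst N))
  · rw [← FunctorToTypes.map_comp_apply, prod.lift_snd, FunctorToTypes.map_comp_apply,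
      map_snd_mp]
    have hmp : B.pt.left.obj.map (thet γ.a γ.c b₁)
        (mp B.pt.left.obj (elm M (secAt M B s γ.m))
          (elm M (0 : yel M (mp M.obj γ.k (M.obj.map prod.fst N)) ⟶ B.pt)))
        = mp B.pt.left.obj (elm M (secAt M B s γ.m)) (elm M (0 : yel M γ.k ⟶ B.pt)) := by
      apply mp_unique B.pt.left.obj
      · rw [← FunctorToTypes.map_comp_apply, thet, prod.lift_fst, map_fst_mp]
      · rw [← FunctorToTypes.map_comp_apply, thet, prod.lift_snd,
          FunctorToTypes.map_comp_apply, map_snd_mp]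
        exact elm_zero_map M prod.fst (map_fst_mp M.obj γ.k (M.obj.map prod.fst N))
    rw [hmp]

/-- free extension of iGen₁ -/
noncomputable def iF₁ : FreeAbelianGroup (Gen M b₁ (M.obj.map prod.fst N)) →+
    FreeAbelianGroup (Gen M (b₁ ⨯ b₂) N) :=
  FreeAbelianGroup.map (iGen₁ M N)

noncomputable def iF₂ : FreeAbelianGroup (Gen M b₂ (M.obj.map prod.snd N)) →+
    FreeAbelianGroup (Gen M (b₁ ⨯ b₂) N) :=
  FreeAbelianGroup.map (iGen₂ M N)

lemma Phi_iF₁ (x) : Phi M B s (b₁ ⨯ b₂) N (iF₁ M N x) = iB₁ M N B (Phi M B s b₁ _ x) := by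
  refine FreeAbelianGroup.induction_on x ?_ ?_ ?_ ?_
  · simp only [map_zero]
  · intro γ
    rw [iF₁, FreeAbelianGroup.map_of_apply]
    exact Phi_iGen₁ M N B s γ
  · intro γ h
    simp only [map_neg, h]
  · intro y z hy hz
    simp only [map_add, hy, hz]

lemma Phi_iF₂ (x) : Phi M B s (b₁ ⨯ b₂) N (iF₂ M N x) = iB₂ M N B (Phi M B s b₂ _ x) := by
  refine FreeAbelianGroup.induction_on x ?_ ?_ ?_ ?_
  · simp only [map_zero]
  · intro γ
    rw [iF₂, FreeAbelianGroup.map_of_apply]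
    exact Phi_iGen₂ M N B s γ
  · intro γ h
    simp only [map_neg, h]
  · intro y z hy hz
    simp only [map_add, hy, hz]

/-- fiberwise inclusions of W into a product fiber -/
noncomputable def iW₁ : W M b₁ (M.obj.map prod.fst N) →+ W M (b₁ ⨯ b₂) N :=
  QuotientAddGroup.map _ _ (iF₁ M N) (fun x hx B s => by
    rw [Phi_iF₁, hx B s, map_zero])

noncomputable def iW₂ : W M b₂ (M.obj.map prod.snd N) →+ W M (b₁ ⨯ b₂) N :=
  QuotientAddGroup.map _ _ (iF₂ M N) (fun x hx B s => by
    rw [Phi_iF₂, hx B s, map_zero])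

lemma PhiQ_iW₁ (w) : PhiQ M B s (b₁ ⨯ b₂) N (iW₁ M N w) = iB₁ M N B (PhiQ M B s b₁ _ w) := by
  obtain ⟨x, rfl⟩ := mkW_surjective M w
  exact Phi_iF₁ M N B s x

lemma PhiQ_iW₂ (w) : PhiQ M B s (b₁ ⨯ b₂) N (iW₂ M N w) = iB₂ M N B (PhiQ M B s b₂ _ w) := by
  obtain ⟨x, rfl⟩ := mkW_surjective M w
  exact Phi_iF₂ M N B s x

lemma pairU_eta {X : Over M} {a c : A} {n : M.obj.obj (a ⨯ c)} {m : M.obj.obj a}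
    {k : M.obj.obj c} (h1 : M.obj.map prod.fst n = m) (h2 : M.obj.map prod.snd n = k)
    (V : yel M n ⟶ X) :
    pairU M h1 h2 (ovMap M prod.fst h1 ≫ V) (ovMap M prod.snd h2 ≫ V) = V := by
  subst h1; subst h2
  apply fib_ext M
  · rw [pairU_fst]
  · rw [pairU_snd]

lemma Wmap_fst_iW₁ (w) : Wmap M prod.fst rfl (iW₁ M N w) = w := by
  apply wext M
  intro B s
  rw [PhiQ_Wmap, PhiQ_iW₁]
  exact pairU_fst M rfl rfl _ _

lemma Wmap_snd_iW₁ (w) : Wmap M prod.snd rfl (iW₁ M N w) = 0 := by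
  apply wext M
  intro B s
  rw [PhiQ_Wmap, PhiQ_iW₁, map_zero]
  exact pairU_snd M rfl rfl _ _

lemma Wmap_fst_iW₂ (w) : Wmap M prod.fst rfl (iW₂ M N w) = 0 := by
  apply wext M
  intro B s
  rw [PhiQ_Wmap, PhiQ_iW₂, map_zero]
  exact pairU_fst M rfl rfl _ _

lemma Wmap_snd_iW₂ (w) : Wmap M prod.snd rfl (iW₂ M N w) = w := by
  apply wext M
  intro B s
  rw [PhiQ_Wmap, PhiQ_iW₂]
  exact pairU_snd M rfl rfl _ _

lemma iW_eta (w : W M (b₁ ⨯ b₂) N) :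
    iW₁ M N (Wmap M prod.fst rfl w) + iW₂ M N (Wmap M prod.snd rfl w) = w := by
  apply wext M
  intro B s
  rw [map_add, PhiQ_iW₁, PhiQ_iW₂, PhiQ_Wmap, PhiQ_Wmap]
  show pairU M rfl rfl _ 0 + pairU M rfl rfl 0 _ = _
  rw [← pairU_add, add_zero, zero_add]
  exact pairU_eta M rfl rfl _

lemma OmF_prod_inj {x y : (OmF M).obj (b₁ ⨯ b₂)}
    (h1 : (OmF M).map prod.fst x = (OmF M).map prod.fst y)
    (h2 : (OmF M).map prod.snd x = (OmF M).map prod.snd y) : x = y := by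
  obtain ⟨n, w⟩ := x; obtain ⟨n', w'⟩ := y
  have h1' : (⟨M.obj.map prod.fst n, Wmap M prod.fst rfl w⟩ : Σ nn : M.obj.obj b₁, W M b₁ nn)
      = ⟨M.obj.map prod.fst n', Wmap M prod.fst rfl w'⟩ := h1
  have h2' : (⟨M.obj.map prod.snd n, Wmap M prod.snd rfl w⟩ : Σ nn : M.obj.obj b₂, W M b₂ nn)
      = ⟨M.obj.map prod.snd n', Wmap M prod.snd rfl w'⟩ := h2
  have hn : n = n' := Fp_ext M.obj (congrArg Sigma.fst h1') (congrArg Sigma.fst h2')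
  subst hn
  injection h1' with hh1 hw1
  injection h2' with hh2 hw2
  have e1 : Wmap M prod.fst rfl w = Wmap M prod.fst rfl w' := hw1
  have e2 : Wmap M prod.snd rfl w = Wmap M prod.snd rfl w' := hw2
  have h3 := iW_eta M n w
  rw [e1, e2, iW_eta] at h3
  rw [← h3]

end Products

/-! ### OmF preserves finite products -/

lemma OmF_map_def {b b' : A} (g : b ⟶ b') (x : (OmF M).obj b) :
    (OmF M).map g x = ⟨M.obj.map g x.1, Wmap M g rfl x.2⟩ := rfl

lemma liftP_fst {b₁ b₂ : A} (n₁ : M.obj.obj b₁) (n₂ : M.obj.obj b₂)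
    (w₁ : W M b₁ n₁) (w₂ : W M b₂ n₂) :
    (OmF M).map prod.fst
      (⟨mp M.obj n₁ n₂,
        iW₁ M (mp M.obj n₁ n₂) (castWH M (map_fst_mp M.obj n₁ n₂).symm w₁)
          + iW₂ M (mp M.obj n₁ n₂) (castWH M (map_snd_mp M.obj n₁ n₂).symm w₂)⟩ :
        (OmF M).obj (b₁ ⨯ b₂)) = ⟨n₁, w₁⟩ := by
  rw [OmF_map_def]
  show (⟨M.obj.map prod.fst (mp M.obj n₁ n₂), Wmap M prod.fst rfl _⟩
    : Σ nn : M.obj.obj b₁, W M b₁ nn) = _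
  rw [map_add, Wmap_fst_iW₁, Wmap_fst_iW₂, add_zero]
  exact sig_cast M (map_fst_mp M.obj n₁ n₂).symm w₁

lemma liftP_snd {b₁ b₂ : A} (n₁ : M.obj.obj b₁) (n₂ : M.obj.obj b₂)
    (w₁ : W M b₁ n₁) (w₂ : W M b₂ n₂) :
    (OmF M).map prod.snd
      (⟨mp M.obj n₁ n₂,
        iW₁ M (mp M.obj n₁ n₂) (castWH M (map_fst_mp M.obj n₁ n₂).symm w₁)
          + iW₂ M (mp M.obj n₁ n₂) (castWH M (map_snd_mp M.obj n₁ n₂).symm w₂)⟩ :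
        (OmF M).obj (b₁ ⨯ b₂)) = ⟨n₂, w₂⟩ := by
  rw [OmF_map_def]
  show (⟨M.obj.map prod.snd (mp M.obj n₁ n₂), Wmap M prod.snd rfl _⟩
    : Σ nn : M.obj.obj b₂, W M b₂ nn) = _
  rw [map_add, Wmap_snd_iW₁, Wmap_snd_iW₂, zero_add]
  exact sig_cast M (map_snd_mp M.obj n₁ n₂).symm w₂

noncomputable def prodIsLim (b₁ b₂ : A) :
    IsLimit ((OmF M).mapCone (BinaryFan.mk (prod.fst : b₁ ⨯ b₂ ⟶ b₁) prod.snd)) where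
  lift c := TypeCat.ofHom (fun z =>
    ⟨mp M.obj (c.π.app ⟨WalkingPair.left⟩ z).1 (c.π.app ⟨WalkingPair.right⟩ z).1,
      iW₁ M _ (castWH M (map_fst_mp M.obj _ _).symm (c.π.app ⟨WalkingPair.left⟩ z).2)
        + iW₂ M _ (castWH M (map_snd_mp M.obj _ _).symm (c.π.app ⟨WalkingPair.right⟩ z).2)⟩)
  fac c j := by
    obtain ⟨j⟩ := j
    cases j
    · ext z : 3
      exact liftP_fst M _ _ _ _
    · ext z : 3
      exact liftP_snd M _ _ _ _
  uniq c m hm := by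
    ext z : 3
    apply OmF_prod_inj M
    · have h1 := types_congr_hom (hm ⟨WalkingPair.left⟩) z
      have h2 := liftP_fst M (c.π.app ⟨WalkingPair.left⟩ z).1
        (c.π.app ⟨WalkingPair.right⟩ z).1 (c.π.app ⟨WalkingPair.left⟩ z).2
        (c.π.app ⟨WalkingPair.right⟩ z).2
      exact h1.trans h2.symm
    · have h1 := types_congr_hom (hm ⟨WalkingPair.right⟩) z
      have h2 := liftP_snd M (c.π.app ⟨WalkingPair.left⟩ z).1
        (c.π.app ⟨WalkingPair.right⟩ z).1 (c.π.app ⟨WalkingPair.left⟩ z).2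
        (c.π.app ⟨WalkingPair.right⟩ z).2
      exact h1.trans h2.symm

/-- the canonical point of the model over the terminal object -/
noncomputable def tstar : M.obj.obj (⊤_ A) := (te M.obj).symm PUnit.unit

lemma OmF_top_sub (x y : (OmF M).obj (⊤_ A)) : x = y :=
  sext M (fun B s => by
    haveI := te_sub B.pt.left.obj
    exact Subsingleton.elim _ _)

noncomputable def OmFTopEquiv : (OmF M).obj (⊤_ A) ≃ PUnit where
  toFun _ := PUnit.unit
  invFun _ := ⟨tstar M, 0⟩
  left_inv x := OmF_top_sub M _ _
  right_inv _ := rfl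

noncomputable instance : PreservesLimitsOfShape (Discrete WalkingPair) (OmF M) where
  preservesLimit {K} :=
    haveI : PreservesLimit (pair (K.obj ⟨WalkingPair.left⟩) (K.obj ⟨WalkingPair.right⟩))
        (OmF M) :=
      preservesLimit_of_preserves_limit_cone (prodIsProd _ _) (prodIsLim M _ _)
    preservesLimit_of_iso_diagram (OmF M) (diagramIsoPair K).symm

noncomputable instance : PreservesLimit (Functor.empty.{0} A) (OmF M) :=
  preservesTerminal_of_iso (OmF M)
    ((Equiv.toIso (OmFTopEquiv M)) ≪≫ Types.terminalIso.symm)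

noncomputable instance : PreservesLimitsOfShape (Discrete PEmpty.{1}) (OmF M) :=
  preservesLimitsOfShape_pempty_of_preservesTerminal _

instance : PreservesFiniteProducts (OmF M) :=
  PreservesFiniteProducts.of_preserves_binary_and_terminal (OmF M)

/-- the module of differentials as a model -/
noncomputable def OmA : AMod A := ⟨OmF M, ⟨inferInstance⟩⟩

/-- projection to `M` -/
noncomputable def pOm : OmA M ⟶ M :=
  ObjectProperty.homMk
  { app := fun b => TypeCat.ofHom (fun x => x.1)
    naturality := fun _ _ g => rfl }

/-- the module of differentials as an object over `M` -/
noncomputable def OmO : Over M := Over.mk (pOm M)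

/-! ### Group structure on sections of OmO -/

lemma oext {T X : Over M} {f g : T ⟶ X}
    (h : ∀ (b : A) (t : T.left.obj.obj b), f.left.hom.app b t = g.left.hom.app b t) : f = g := by
  apply Over.OverMorphism.ext
  ext b t
  exact h b t

/-- fiber component of a morphism into `OmO` -/
noncomputable def fibv {T : Over M} (f : T ⟶ OmO M) (b : A) (t : T.left.obj.obj b) :
    W M b (T.hom.hom.app b t) :=
  castWH M (types_congr_hom (NatTrans.congr_app (congrArg InducedCategory.Hom.hom (Over.w f)) b) t) (f.left.hom.app b t).2

lemma elW_fibv (B : AbGroupObject (Over M)) (s : T0 M ⟶ B.pt) {T : Over M}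
    (f : T ⟶ OmO M) (b : A) (t : T.left.obj.obj b) :
    elW M B s (fibv M f b t) = elP M B s (f.left.hom.app b t) := by
  erw [fibv, elW_cast]
  rfl

lemma fibv_spec {T : Over M} (f : T ⟶ OmO M) (b : A) (t : T.left.obj.obj b) :
    (⟨T.hom.hom.app b t, fibv M f b t⟩ : Σ n : M.obj.obj b, W M b n) = f.left.hom.app b t :=
  sig_cast M _ _

lemma cast_Wmap {b b' : A} (g : b ⟶ b') {n : M.obj.obj b} {n' : M.obj.obj b'}
    (h : M.obj.map g n = n') (w : W M b n) :
    castWH M h (Wmap M g rfl w) = Wmap M g h w := by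
  apply welext M; intro B s
  rw [elW_cast, elW_Wmap, elW_Wmap]

lemma fib_natural {T : Over M} (f : T ⟶ OmO M) {b b' : A} (g' : b ⟶ b')
    (t : T.left.obj.obj b)
    (hb : M.obj.map g' (T.hom.hom.app b t) = T.hom.hom.app b' (T.left.obj.map g' t)) :
    Wmap M g' hb (fibv M f b t) = fibv M f b' (T.left.obj.map g' t) := by
  apply welext M; intro B s
  rw [elW_Wmap, elW_fibv, elW_fibv]
  have hnat : f.left.hom.app b' (T.left.obj.map g' t) = (OmF M).map g' (f.left.hom.app b t) :=
    NatTrans.naturality_apply f.left.hom g' t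
  rw [hnat]
  exact (elP_OmF_map M B s g' _).symm

lemma fibv_comp {T T' : Over M} (h : T ⟶ T') (f : T' ⟶ OmO M) (b : A)
    (t : T.left.obj.obj b)
    (e : T'.hom.hom.app b (h.left.hom.app b t) = T.hom.hom.app b t) :
    castWH M e (fibv M f b (h.left.hom.app b t)) = fibv M (h ≫ f) b t := by
  apply welext M; intro B s
  rw [elW_cast, elW_fibv, elW_fibv]
  have : (h ≫ f).left.hom.app b t = f.left.hom.app b (h.left.hom.app b t) := rfl
  rw [this]

/-- addition of morphisms into OmO -/
noncomputable def addO {T : Over M} (f g : T ⟶ OmO M) : T ⟶ OmO M :=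
  Over.homMk
    (ObjectProperty.homMk
    { app := fun b => TypeCat.ofHom (fun t => ⟨T.hom.hom.app b t, fibv M f b t + fibv M g b t⟩)
      naturality := fun b b' g' => by
        ext t : 3
        have hb : M.obj.map g' (T.hom.hom.app b t) = T.hom.hom.app b' (T.left.obj.map g' t) :=
          (NatTrans.naturality_apply T.hom.hom g' t).symm
        show (⟨T.hom.hom.app b' (T.left.obj.map g' t),
            fibv M f b' (T.left.obj.map g' t) + fibv M g b' (T.left.obj.map g' t)⟩ :
              Σ n : M.obj.obj b', W M b' n)
          = (OmF M).map g' ⟨T.hom.hom.app b t, fibv M f b t + fibv M g b t⟩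
        rw [OmF_map_def]
        refine Eq.symm (((sig_cast M hb _).symm).trans ?_)
        refine congrArg (fun w => (⟨T.hom.hom.app b' (T.left.obj.map g' t), w⟩ :
          Σ n : M.obj.obj b', W M b' n)) ?_
        rw [cast_Wmap, map_add, fib_natural, fib_natural] })
    (by
      ext b t
      rfl)

/-- zero morphism into OmO -/
noncomputable def zeroO (T : Over M) : T ⟶ OmO M :=
  Over.homMk
    (ObjectProperty.homMk
    { app := fun b => TypeCat.ofHom (fun t => ⟨T.hom.hom.app b t, 0⟩)
      naturality := fun b b' g' => by
        ext t : 3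
        have hb : M.obj.map g' (T.hom.hom.app b t) = T.hom.hom.app b' (T.left.obj.map g' t) :=
          (NatTrans.naturality_apply T.hom.hom g' t).symm
        show (⟨T.hom.hom.app b' (T.left.obj.map g' t), (0 : W M b' _)⟩ :
            Σ n : M.obj.obj b', W M b' n)
          = (OmF M).map g' ⟨T.hom.hom.app b t, 0⟩
        rw [OmF_map_def]
        refine Eq.symm (((sig_cast M hb _).symm).trans ?_)
        refine congrArg (fun w => (⟨T.hom.hom.app b' (T.left.obj.map g' t), w⟩ :
          Σ n : M.obj.obj b', W M b' n)) ?_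
        rw [cast_Wmap, map_zero] })
    (by
      ext b t
      rfl)

/-- negation of morphisms into OmO -/
noncomputable def negO {T : Over M} (f : T ⟶ OmO M) : T ⟶ OmO M :=
  Over.homMk
    (ObjectProperty.homMk
    { app := fun b => TypeCat.ofHom (fun t => ⟨T.hom.hom.app b t, - fibv M f b t⟩)
      naturality := fun b b' g' => by
        ext t : 3
        have hb : M.obj.map g' (T.hom.hom.app b t) = T.hom.hom.app b' (T.left.obj.map g' t) :=
          (NatTrans.naturality_apply T.hom.hom g' t).symm
        show (⟨T.hom.hom.app b' (T.left.obj.map g' t), - fibv M f b' (T.left.obj.map g' t)⟩ :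
            Σ n : M.obj.obj b', W M b' n)
          = (OmF M).map g' ⟨T.hom.hom.app b t, - fibv M f b t⟩
        rw [OmF_map_def]
        refine Eq.symm (((sig_cast M hb _).symm).trans ?_)
        refine congrArg (fun w => (⟨T.hom.hom.app b' (T.left.obj.map g' t), w⟩ :
          Σ n : M.obj.obj b', W M b' n)) ?_
        rw [cast_Wmap, map_neg, fib_natural] })
    (by
      ext b t
      rfl)

lemma fibv_addO {T : Over M} (f g : T ⟶ OmO M) (b : A) (t : T.left.obj.obj b) :
    fibv M (addO M f g) b t = fibv M f b t + fibv M g b t := rfl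

lemma fibv_zeroO (T : Over M) (b : A) (t : T.left.obj.obj b) :
    fibv M (zeroO M T) b t = 0 := rfl

lemma fibv_negO {T : Over M} (f : T ⟶ OmO M) (b : A) (t : T.left.obj.obj b) :
    fibv M (negO M f) b t = - fibv M f b t := rfl

lemma addO_app {T : Over M} (f g : T ⟶ OmO M) (b : A) (t : T.left.obj.obj b) :
    (addO M f g).left.hom.app b t = ⟨T.hom.hom.app b t, fibv M f b t + fibv M g b t⟩ := rfl

/-- The module of differentials as an abelian group object over `M`. -/
noncomputable def OmAb : AbGroupObject (Over M) where
  pt := OmO M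
  add := addO M
  zero := zeroO M
  neg := negO M
  add_assoc := fun {T} f g h => by
    apply oext M
    intro b t
    show (⟨T.hom.hom.app b t, fibv M (addO M f g) b t + fibv M h b t⟩ :
        Σ n : M.obj.obj b, W M b n)
      = ⟨T.hom.hom.app b t, fibv M f b t + fibv M (addO M g h) b t⟩
    rw [fibv_addO, fibv_addO, add_assoc]
  add_comm := fun {T} f g => by
    apply oext M
    intro b t
    show (⟨T.hom.hom.app b t, fibv M f b t + fibv M g b t⟩ : Σ n : M.obj.obj b, W M b n)
      = ⟨T.hom.hom.app b t, fibv M g b t + fibv M f b t⟩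
    rw [add_comm]
  zero_add := fun {T} f => by
    apply oext M
    intro b t
    show (⟨T.hom.hom.app b t, fibv M (zeroO M T) b t + fibv M f b t⟩ :
        Σ n : M.obj.obj b, W M b n) = f.left.hom.app b t
    rw [fibv_zeroO, zero_add]
    exact fibv_spec M f b t
  neg_add_cancel := fun {T} f => by
    apply oext M
    intro b t
    show (⟨T.hom.hom.app b t, fibv M (negO M f) b t + fibv M f b t⟩ :
        Σ n : M.obj.obj b, W M b n) = ⟨T.hom.hom.app b t, 0⟩
    rw [fibv_negO, neg_add_cancel]
  add_natural := fun {T T'} h f g => by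
    apply oext M
    intro b t
    have e : T'.hom.hom.app b (h.left.hom.app b t) = T.hom.hom.app b t :=
      types_congr_hom (NatTrans.congr_app (congrArg InducedCategory.Hom.hom (Over.w h)) b) t
    show (⟨T'.hom.hom.app b (h.left.hom.app b t),
        fibv M f b (h.left.hom.app b t) + fibv M g b (h.left.hom.app b t)⟩ :
          Σ n : M.obj.obj b, W M b n)
      = ⟨T.hom.hom.app b t, fibv M (h ≫ f) b t + fibv M (h ≫ g) b t⟩
    refine ((sig_cast M e _).symm).trans ?_
    refine congrArg (fun w => (⟨T.hom.hom.app b t, w⟩ : Σ n : M.obj.obj b, W M b n)) ?_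
    rw [map_add, fibv_comp, fibv_comp]
  zero_natural := fun {T T'} h => by
    apply oext M
    intro b t
    have e : T'.hom.hom.app b (h.left.hom.app b t) = T.hom.hom.app b t :=
      types_congr_hom (NatTrans.congr_app (congrArg InducedCategory.Hom.hom (Over.w h)) b) t
    show (⟨T'.hom.hom.app b (h.left.hom.app b t), (0 : W M b _)⟩ : Σ n : M.obj.obj b, W M b n)
      = ⟨T.hom.hom.app b t, 0⟩
    refine ((sig_cast M e _).symm).trans ?_
    refine congrArg (fun w => (⟨T.hom.hom.app b t, w⟩ : Σ n : M.obj.obj b, W M b n)) ?_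
    rw [map_zero]

/-! ### The universal derivation and the equivalence -/

/-- universal differential generator -/
noncomputable def dgen (a : A) (m : M.obj.obj a) : Gen M a m :=
  ⟨a, ⊤_ A, m, tstar M, prod.fst, map_fst_mp M.obj m (tstar M)⟩

/-- universal differential -/
noncomputable def dW (a : A) (m : M.obj.obj a) : W M a m :=
  mkW M (FreeAbelianGroup.of (dgen M a m))

lemma elm_secAt (B : AbGroupObject (Over M)) (s : T0 M ⟶ B.pt) {a : A}
    (m : M.obj.obj a) : elm M (secAt M B s m) = s.left.hom.app a m := by
  erw [secAt, elm_comp, toT0, elm_toHom]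

lemma elW_dW (B : AbGroupObject (Over M)) (s : T0 M ⟶ B.pt) {a : A} (m : M.obj.obj a) :
    elW M B s (dW M a m) = s.left.hom.app a m := by
  show elm M (Phi M B s a m (FreeAbelianGroup.of (dgen M a m))) = s.left.hom.app a m
  rw [elm_Phi_of]
  simp only [dgen]
  erw [map_fst_mp, elm_secAt]

/-- the universal derivation -/
noncomputable def delta : T0 M ⟶ OmO M :=
  Over.homMk
    (ObjectProperty.homMk
    { app := fun a => TypeCat.ofHom (fun m => ⟨m, dW M a m⟩)
      naturality := fun a b g => by
        ext m : 3
        show (⟨M.obj.map g m, dW M b (M.obj.map g m)⟩ : Σ n : M.obj.obj b, W M b n)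
          = (OmF M).map g ⟨m, dW M a m⟩
        rw [OmF_map_def]
        refine congrArg (fun w => (⟨M.obj.map g m, w⟩ : Σ n : M.obj.obj b, W M b n)) ?_
        apply welext M; intro B s
        rw [elW_dW, elW_Wmap, elW_dW]
        show s.left.hom.app b (M.obj.map g m) = B.pt.left.obj.map g (s.left.hom.app a m)
        exact NatTrans.naturality_apply s.left.hom g m })
    (by
      ext a m
      rfl)

/-- the classifying morphism of a section -/
noncomputable def Psi (B : AbGroupObject (Over M)) (s : T0 M ⟶ B.pt) :
    OmO M ⟶ B.pt :=
  Over.homMk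
    (ObjectProperty.homMk
    { app := fun b => TypeCat.ofHom (fun x => elW M B s x.2)
      naturality := fun b b' g => by
        ext x : 3
        show elW M B s ((OmF M).map g x).2 = B.pt.left.obj.map g (elW M B s x.2)
        exact elP_OmF_map M B s g x })
    (by
      ext b x
      show B.pt.hom.hom.app b (elW M B s x.2) = x.1
      exact elm_over M (PhiQ M B s b x.1 x.2))

/-- element of the fiber of `OmO` -/
noncomputable def xhat {b : A} {n : M.obj.obj b} (w : W M b n) : yel M n ⟶ OmO M :=
  toHom M (X := OmO M) ⟨n, w⟩ rfl

lemma elm_xhat {b : A} {n : M.obj.obj b} (w : W M b n) :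
    elm M (xhat M w) = ⟨n, w⟩ := elm_toHom M _ _

lemma xhat_Psi (B : AbGroupObject (Over M)) (s : T0 M ⟶ B.pt) {b : A}
    {n : M.obj.obj b} (w : W M b n) :
    xhat M w ≫ Psi M B s = PhiQ M B s b n w := by
  apply hom_ext M
  rw [elm_comp, elm_xhat]
  rfl

lemma that_f {T : Over M} (f : T ⟶ OmO M) (b : A) (t : T.left.obj.obj b) :
    toHom M (X := T) t rfl ≫ f = xhat M (fibv M f b t) := by
  apply hom_ext M
  rw [elm_comp, elm_toHom, elm_xhat]
  exact (fibv_spec M f b t).symm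

lemma Badd_app (B : AbGroupObject (Over M)) {T : Over M} (F G : T ⟶ B.pt) (b : A)
    (t : T.left.obj.obj b) :
    (B.add F G).left.hom.app b t
      = elm M (B.add (toHom M (X := T) t rfl ≫ F) (toHom M (X := T) t rfl ≫ G)) := by
  rw [← B.add_natural, elm_comp, elm_toHom]

lemma Psi_add (B : AbGroupObject (Over M)) (s : T0 M ⟶ B.pt) {T : Over M}
    (f g : T ⟶ (OmAb M).pt) :
    (OmAb M).add f g ≫ Psi M B s = B.add (f ≫ Psi M B s) (g ≫ Psi M B s) := by
  apply oext M
  intro b t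
  rw [show ((OmAb M).add f g ≫ Psi M B s).left.hom.app b t
      = elW M B s (fibv M f b t + fibv M g b t) from rfl]
  erw [Badd_app M B, ← Category.assoc, ← Category.assoc, that_f M f b t, that_f M g b t,
    xhat_Psi, xhat_Psi]
  show elm M (PhiQ M B s b (T.hom.hom.app b t) (fibv M f b t + fibv M g b t)) = _
  rw [map_add]
  rfl

lemma zero_comp_phi (B : AbGroupObject (Over M)) (φ : AbHom (OmAb M) B) (T : Over M) :
    (OmAb M).zero T ≫ φ.1 = (0 : T ⟶ B.pt) := by
  have h := φ.2 ((OmAb M).zero T) ((OmAb M).zero T)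
  rw [(OmAb M).zero_add] at h
  have h2 : (0 : T ⟶ B.pt) + ((OmAb M).zero T ≫ φ.1)
      = ((OmAb M).zero T ≫ φ.1) + ((OmAb M).zero T ≫ φ.1) := by
    rw [zero_add]
    exact h
  exact (add_right_cancel h2).symm

lemma fibv_xhat_id {b : A} {n : M.obj.obj b} (w : W M b n)
    (e : n = M.obj.map (𝟙 b) n) :
    fibv M (xhat M w) b (𝟙 b) = castWH M e w := by
  apply welext M; intro B s
  erw [elW_fibv, elW_cast M B s e w]
  show elP M B s ((OmF M).map (𝟙 b) ⟨n, w⟩) = elW M B s w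
  rw [elP_OmF_map, FunctorToTypes.map_id_apply]
  rfl

lemma xhat_add {b : A} {n : M.obj.obj b} (u v : W M b n) :
    xhat M (u + v) = (OmAb M).add (xhat M u) (xhat M v) := by
  apply hom_ext M
  rw [elm_xhat]
  have e : n = M.obj.map (𝟙 b) n := (FunctorToTypes.map_id_apply M.obj n).symm
  show (⟨n, u + v⟩ : Σ nn : M.obj.obj b, W M b nn)
    = ⟨M.obj.map (𝟙 b) n, fibv M (xhat M u) b (𝟙 b) + fibv M (xhat M v) b (𝟙 b)⟩
  refine ((sig_cast M e (u + v)).symm).trans ?_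
  refine congrArg (fun w => (⟨M.obj.map (𝟙 b) n, w⟩ : Σ nn : M.obj.obj b, W M b nn)) ?_
  rw [map_add, fibv_xhat_id M u e, fibv_xhat_id M v e]
  rfl

lemma elm_zeroO {b : A} (n : M.obj.obj b) :
    elm M ((OmAb M).zero (yel M n)) = ⟨n, (0 : W M b n)⟩ := by
  have e : n = M.obj.map (𝟙 b) n := (FunctorToTypes.map_id_apply M.obj n).symm
  show (⟨M.obj.map (𝟙 b) n, (0 : W M b (M.obj.map (𝟙 b) n))⟩ : Σ nn : M.obj.obj b, W M b nn)
    = ⟨n, 0⟩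
  have h0 : (castWH M e) (0 : W M b n) = 0 := map_zero _
  rw [← h0]
  exact sig_cast M e 0

lemma xhat_zero {b : A} (n : M.obj.obj b) :
    xhat M (0 : W M b n) = (OmAb M).zero (yel M n) := by
  apply hom_ext M
  erw [elm_xhat]

/-! ### The universal property -/

lemma elW_zero (B : AbGroupObject (Over M)) (s : T0 M ⟶ B.pt) {b : A} {n : M.obj.obj b} :
    elW M B s (0 : W M b n) = elm M (0 : yel M n ⟶ B.pt) := by
  rw [elW, map_zero]

/-- tautological generator -/
noncomputable def idG {a c : A} (m : M.obj.obj a) (k : M.obj.obj c) :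
    Gen M (a ⨯ c) (mp M.obj m k) :=
  ⟨a, c, m, k, 𝟙 (a ⨯ c), FunctorToTypes.map_id_apply M.obj _⟩

lemma gen_as_map {b : A} {n : M.obj.obj b} (γ : Gen M b n) :
    (⟨n, mkW M (FreeAbelianGroup.of γ)⟩ : Σ nn : M.obj.obj b, W M b nn)
      = (OmF M).map γ.g ⟨mp M.obj γ.m γ.k, mkW M (FreeAbelianGroup.of (idG M γ.m γ.k))⟩ := by
  rw [OmF_map_def]
  refine (congrArg (fun w => (⟨n, w⟩ : Σ nn : M.obj.obj b, W M b nn)) ?_).trans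
    (sig_cast M γ.hg _)
  rw [cast_Wmap]
  apply welext M; intro B s
  show elm M (Phi M B s b n (FreeAbelianGroup.of γ))
    = elW M B s (Wmap M γ.g γ.hg (mkW M (FreeAbelianGroup.of (idG M γ.m γ.k))))
  rw [elm_Phi_of, elW_Wmap]
  show _ = B.pt.left.obj.map γ.g
    (elm M (Phi M B s _ _ (FreeAbelianGroup.of (idG M γ.m γ.k))))
  rw [elm_Phi_of]
  simp only [idG]
  erw [FunctorToTypes.map_id_apply]
  rfl

lemma fst_idG {a c : A} (m : M.obj.obj a) (k : M.obj.obj c) :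
    (OmF M).map prod.fst ⟨mp M.obj m k, mkW M (FreeAbelianGroup.of (idG M m k))⟩
      = ⟨m, dW M a m⟩ := by
  rw [OmF_map_def]
  refine ((sig_cast M (map_fst_mp M.obj m k) _).symm).trans ?_
  refine congrArg (fun w => (⟨m, w⟩ : Σ nn : M.obj.obj a, W M a nn)) ?_
  rw [cast_Wmap]
  apply welext M; intro B s
  rw [elW_Wmap, elW_dW]
  show B.pt.left.obj.map prod.fst
    (elm M (Phi M B s _ _ (FreeAbelianGroup.of (idG M m k)))) = s.left.hom.app a m
  rw [elm_Phi_of]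
  simp only [idG]
  erw [FunctorToTypes.map_id_apply, map_fst_mp, elm_secAt]

lemma snd_idG {a c : A} (m : M.obj.obj a) (k : M.obj.obj c) :
    (OmF M).map prod.snd ⟨mp M.obj m k, mkW M (FreeAbelianGroup.of (idG M m k))⟩
      = ⟨k, (0 : W M c k)⟩ := by
  rw [OmF_map_def]
  refine ((sig_cast M (map_snd_mp M.obj m k) _).symm).trans ?_
  refine congrArg (fun w => (⟨k, w⟩ : Σ nn : M.obj.obj c, W M c nn)) ?_
  rw [cast_Wmap]
  apply welext M; intro B s
  rw [elW_Wmap, elW_zero]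
  show B.pt.left.obj.map prod.snd
    (elm M (Phi M B s _ _ (FreeAbelianGroup.of (idG M m k)))) = _
  rw [elm_Phi_of]
  simp only [idG]
  erw [FunctorToTypes.map_id_apply, map_snd_mp]
  rfl

lemma phi_idG (B : AbGroupObject (Over M)) (φ : AbHom (OmAb M) B) {a c : A}
    (m : M.obj.obj a) (k : M.obj.obj c) :
    φ.1.left.hom.app (a ⨯ c) ⟨mp M.obj m k, mkW M (FreeAbelianGroup.of (idG M m k))⟩
      = mp B.pt.left.obj (elm M (secAt M B (delta M ≫ φ.1) m))
          (elm M (0 : yel M k ⟶ B.pt)) := by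
  apply mp_unique B.pt.left.obj
  · have hnat : B.pt.left.obj.map prod.fst
        (φ.1.left.hom.app (a ⨯ c) ⟨mp M.obj m k, mkW M (FreeAbelianGroup.of (idG M m k))⟩)
        = φ.1.left.hom.app a ((OmF M).map prod.fst
            ⟨mp M.obj m k, mkW M (FreeAbelianGroup.of (idG M m k))⟩) :=
      (NatTrans.naturality_apply φ.1.left.hom prod.fst _).symm
    rw [hnat, fst_idG, elm_secAt]
    rfl
  · have hnat : B.pt.left.obj.map prod.snd
        (φ.1.left.hom.app (a ⨯ c) ⟨mp M.obj m k, mkW M (FreeAbelianGroup.of (idG M m k))⟩)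
        = φ.1.left.hom.app c ((OmF M).map prod.snd
            ⟨mp M.obj m k, mkW M (FreeAbelianGroup.of (idG M m k))⟩) :=
      (NatTrans.naturality_apply φ.1.left.hom prod.snd _).symm
    rw [hnat, snd_idG, ← elm_zeroO M k]
    rw [show φ.1.left.hom.app c (elm M ((OmAb M).zero (yel M k)))
        = elm M ((OmAb M).zero (yel M k) ≫ φ.1) from (elm_comp M _ _).symm,
      zero_comp_phi]

lemma PhiQ_delta (B : AbGroupObject (Over M)) (φ : AbHom (OmAb M) B) {b : A}
    {n : M.obj.obj b} (w : W M b n) :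
    PhiQ M B (delta M ≫ φ.1) b n w = xhat M w ≫ φ.1 := by
  obtain ⟨x, rfl⟩ := mkW_surjective M w
  have hadd : ∀ w w' : W M b n,
      xhat M (w + w') ≫ φ.1 = (xhat M w ≫ φ.1) + (xhat M w' ≫ φ.1) := by
    intro w w'
    rw [xhat_add]
    exact φ.2 _ _
  have hzero : xhat M (0 : W M b n) ≫ φ.1 = 0 := by
    rw [xhat_zero]
    exact zero_comp_phi M B φ _
  have hneg : ∀ w : W M b n, xhat M (-w) ≫ φ.1 = -(xhat M w ≫ φ.1) := by
    intro w
    have h2 : (xhat M (-w) ≫ φ.1) + (xhat M w ≫ φ.1) = 0 := by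
      rw [← hadd, neg_add_cancel, hzero]
    have := congrArg (fun z => z - (xhat M w ≫ φ.1)) h2
    simpa [add_sub_cancel_right, zero_sub] using this
  refine FreeAbelianGroup.induction_on x ?_ ?_ ?_ ?_
  · rw [map_zero, map_zero, hzero]
  · intro γ
    apply hom_ext M
    rw [show PhiQ M B (delta M ≫ φ.1) b n (mkW M (FreeAbelianGroup.of γ))
        = Phi M B (delta M ≫ φ.1) b n (FreeAbelianGroup.of γ) from rfl,
      elm_Phi_of]
    refine Eq.trans ?_ (elm_comp M (xhat M _) φ.1).symm
    rw [elm_xhat, gen_as_map M γ]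
    refine Eq.trans ?_ (show φ.1.left.hom.app b ((OmF M).map γ.g
          ⟨mp M.obj γ.m γ.k, mkW M (FreeAbelianGroup.of (idG M γ.m γ.k))⟩)
        = B.pt.left.obj.map γ.g (φ.1.left.hom.app _
            ⟨mp M.obj γ.m γ.k, mkW M (FreeAbelianGroup.of (idG M γ.m γ.k))⟩) from
      NatTrans.naturality_apply φ.1.left.hom γ.g _).symm
    rw [phi_idG M B φ γ.m γ.k]
  · intro γ h
    rw [map_neg, map_neg, hneg, h]
  · intro y z hy hz
    rw [map_add, map_add, hadd, hy, hz]

/-- The equivalence between maps out of the module of differentials and sections. -/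
noncomputable def eEquiv (B : AbGroupObject (Over M)) :
    AbHom (OmAb M) B ≃ (T0 M ⟶ B.pt) where
  toFun φ := delta M ≫ φ.1
  invFun s := ⟨Psi M B s, fun {T} f g => Psi_add M B s f g⟩
  left_inv φ := by
    apply Subtype.ext
    apply oext M
    intro b x
    show elW M B (delta M ≫ φ.1) x.2 = φ.1.left.hom.app b x
    rw [elW]
    rw [show PhiQ M B (delta M ≫ φ.1) b x.1 x.2 = xhat M x.2 ≫ φ.1 from
      PhiQ_delta M B φ x.2]
    erw [elm_comp, elm_xhat]
    rfl
  right_inv s := by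
    apply oext M
    intro a m
    show elW M B s (dW M a m) = s.left.hom.app a m
    exact elW_dW M B s m

end Stmt17

/-- **Representability of derivations.**  For a theory `A` and a model `M`, the
functor `B ↦ Der(M;B)` of sections `M → B` on abelian group objects `B` of
`A-mod/M` is representable: there is an abelian group object `Ω¹_M` with
`Hom(Ω¹_M, B) ≅ Der(M;B)` naturally in `B` (an isomorphism of abelian groups,
where `Der(M;B)` is the group of morphisms from the terminal object `id : M → M`
of `A-mod/M` to `B`). -/
theorem stmt17 {A : Type} [SmallCategory A] [HasFiniteProducts A] (M : AMod A) :
    ∃ (Ω : AbGroupObject (Over M))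
      (e : ∀ B : AbGroupObject (Over M), AbHom Ω B ≃ (Over.mk (𝟙 M) ⟶ B.pt)),
      (∀ (B B' : AbGroupObject (Over M)) (ψ : AbHom B B') (φ : AbHom Ω B),
        e B' (φ.comp ψ) = e B φ ≫ ψ.1) ∧
      (∀ (B : AbGroupObject (Over M)) (φ φ' : AbHom Ω B),
        ∃ χ : AbHom Ω B, χ.1 = B.add φ.1 φ'.1 ∧
          e B χ = B.add (e B φ) (e B φ')) := by
  refine ⟨Stmt17.OmAb M, fun B => Stmt17.eEquiv M B, fun B B' ψ φ => ?_, fun B φ φ' => ?_⟩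
  · show Stmt17.delta M ≫ (φ.1 ≫ ψ.1) = (Stmt17.delta M ≫ φ.1) ≫ ψ.1
    erw [Category.assoc]
  · refine ⟨⟨B.add φ.1 φ'.1, fun {T} f g => ?_⟩, rfl, ?_⟩
    · have h1 := B.add_natural ((Stmt17.OmAb M).add f g) φ.1 φ'.1
      rw [φ.2 f g, φ'.2 f g] at h1
      rw [h1, B.add_natural f φ.1 φ'.1, B.add_natural g φ.1 φ'.1]
      exact add_add_add_comm (f ≫ φ.1) (g ≫ φ.1) (f ≫ φ'.1) (g ≫ φ'.1)
    · show Stmt17.delta M ≫ B.add φ.1 φ'.1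
        = B.add (Stmt17.delta M ≫ φ.1) (Stmt17.delta M ≫ φ'.1)
      exact B.add_natural _ _ _
end
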